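/- arXiv:0910.4789 — 4 statements merged into one kernel-verified Lean document; each statement's English description precedes it below -/
import Mathlib

section
/- If the finite simplicial graph Γ contains two distinct vertices x, y with x ≥ y and y ≥ x (a domination-equivalent pair), then Out(A_Γ) contains a subgroup isomorphic to the free group of rank 2. -/
open SimpleGraph
open scoped commutatorElement

variable {V : Type*}

/-- The link of a vertex: the set of adjacent vertices. -/
def lk (G : SimpleGraph V) (x : V) : Set V := {z | G.Adj x z}

/-- The star of a vertex: the link together with the vertex itself. -/
def st (G : SimpleGraph V) (x : V) : Set V := insert x (lk G x)

/-- `Dominates G y x` means `y ≥ x`, i.e. `lk x ⊆ st y`. -/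
def Dominates (G : SimpleGraph V) (y x : V) : Prop := lk G x ⊆ st G y

/-- `Γ` contains a domination-equivalent pair of (distinct) vertices. -/
def DomEquivPair (G : SimpleGraph V) : Prop :=
  ∃ x y : V, x ≠ y ∧ Dominates G x y ∧ Dominates G y x

/-- `S` separates `u` from `v`: both lie outside `S` and they are not joined by a path
in the induced subgraph on the complement of `S`. -/
def SeparatesFrom (G : SimpleGraph V) (S : Set V) (u v : V) : Prop :=
  ∃ (hu : u ∈ Sᶜ) (hv : v ∈ Sᶜ),
    ¬ (G.induce Sᶜ).Reachable ⟨u, hu⟩ ⟨v, hv⟩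

/-- `Γ` has a separating intersection of links: there are distinct non-adjacent vertices
`x, y` and a vertex `z` whose connected component in the induced subgraph on the
complement of `lk x ∩ lk y` contains neither `x` nor `y`. -/
def SepIntLinks (G : SimpleGraph V) : Prop :=
  ∃ x y : V, x ≠ y ∧ ¬ G.Adj x y ∧ ∃ z : V,
    SeparatesFrom G (lk G x ∩ lk G y) z x ∧ SeparatesFrom G (lk G x ∩ lk G y) z y

/-- `Y` is the vertex set of a connected component of the induced subgraph on `S`. -/
def IsCompOf (G : SimpleGraph V) (S : Set V) (Y : Set V) : Prop :=
  Y.Nonempty ∧ Y ⊆ S ∧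
    ∀ a : S, a.1 ∈ Y → ∀ b : S, ((G.induce S).Reachable a b ↔ b.1 ∈ Y)

/-- The defining relators of the right-angled Artin group of `G`. -/
def raagRels (G : SimpleGraph V) : Set (FreeGroup V) :=
  {r | ∃ x y : V, G.Adj x y ∧ r = ⁅FreeGroup.of x, FreeGroup.of y⁆}

/-- The right-angled Artin group of a graph. -/
abbrev RAAG (G : SimpleGraph V) : Type _ := PresentedGroup (raagRels G)

/-- The generator of the RAAG corresponding to a vertex. -/
def gen (G : SimpleGraph V) (x : V) : RAAG G := PresentedGroup.of x

/-- The subgroup of inner automorphisms. -/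
def Inn (H : Type*) [Group H] : Subgroup (MulAut H) := (MulAut.conj : H →* MulAut H).range

instance Inn.normal (H : Type*) [Group H] : (Inn H).Normal := by
  constructor
  intro n hn g
  obtain ⟨h, rfl⟩ := hn
  refine ⟨g h, ?_⟩
  ext x
  simp [MulAut.conj]

/-- The outer automorphism group `Out(A_Γ)` of the RAAG of `G`. -/
abbrev OutG (G : SimpleGraph V) := MulAut (RAAG G) ⧸ Inn (RAAG G)

/-- A group contains a subgroup isomorphic to the free group of rank 2. -/
def HasFreeRankTwo (H : Type*) [Group H] : Prop :=
  ∃ K : Subgroup H, Nonempty (↥K ≃* FreeGroup (Fin 2))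

/-- A group is virtually nilpotent. -/
def VirtNilpotent (H : Type*) [Group H] : Prop :=
  ∃ K : Subgroup H, K.FiniteIndex ∧ Group.IsNilpotent ↥K

/-- `φ` is a transvection with multiplier `x^ε` acting on the generator `y`
(either a right or a left transvection). -/
def IsTransvection (G : SimpleGraph V) (φ : MulAut (RAAG G)) (x y : V) (ε : ℤ) : Prop :=
  x ≠ y ∧ Dominates G x y ∧ (ε = 1 ∨ ε = -1) ∧
  (φ (gen G y) = gen G y * (gen G x) ^ ε ∨ φ (gen G y) = (gen G x) ^ ε * gen G y) ∧
  ∀ z : V, z ≠ y → φ (gen G z) = gen G z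

/-- `φ` is a non-inner partial conjugation with multiplier `x^ε`, conjugating exactly the
generators in the connected component `Y` of the complement of `st x`. -/
def IsPartialConj (G : SimpleGraph V) (φ : MulAut (RAAG G)) (x : V) (ε : ℤ) (Y : Set V) : Prop :=
  (ε = 1 ∨ ε = -1) ∧ IsCompOf G ((st G x)ᶜ) Y ∧ ((st G x ∪ Y)ᶜ).Nonempty ∧
  (∀ y ∈ Y, φ (gen G y) = (gen G x) ^ (-ε) * gen G y * (gen G x) ^ ε) ∧
  ∀ z : V, z ∉ Y → φ (gen G z) = gen G z

/-- A domination chain, listed with the dominant member first. -/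
def IsDomChain (G : SimpleGraph V) (l : List V) : Prop :=
  l ≠ [] ∧ l.Nodup ∧ l.Chain' (fun a b => Dominates G a b)

/-- The domination depth of a vertex: the maximal length of a domination chain with
top member `x`. -/
noncomputable def domDepth (G : SimpleGraph V) (x : V) : ℕ :=
  sSup {n | ∃ l : List V, IsDomChain G l ∧ l.head? = some x ∧ l.length = n + 1}

/-- A star-separation preserving domination chain with top member `xm` and
bottom member `x1`. -/
def IsSSPChain (G : SimpleGraph V) (l : List V) (xm x1 : V) : Prop :=
  IsDomChain G l ∧ l.head? = some xm ∧ l.getLast? = some x1 ∧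
  ∃ Y1 Y2 : Set V, IsCompOf G ((st G x1)ᶜ) Y1 ∧ IsCompOf G ((st G x1)ᶜ) Y2 ∧
    Y1 ≠ Y2 ∧ ¬ Y1 ⊆ st G xm ∧ ¬ Y2 ⊆ st G xm

/-- The star-separation depth of a vertex: `1 +` the maximal length of a star-separation
preserving chain with top member `x` (this is `0` if there is no such chain, as then the
set below is empty). -/
noncomputable def ssDepth (G : SimpleGraph V) (x : V) : ℕ :=
  sSup {n | ∃ (l : List V) (x1 : V), IsSSPChain G l x x1 ∧ l.length = n}

/-- The depth of a vertex. -/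
noncomputable def vdepth (G : SimpleGraph V) (x : V) : ℕ := max (domDepth G x) (ssDepth G x)

/-- The depth of the graph `G`. -/
noncomputable def gdepth (G : SimpleGraph V) : ℕ := sSup {n | ∃ x : V, n = vdepth G x}

/-- The set of images in `Out(A_Γ)` of all transvections and all non-inner partial
conjugations. -/
def TvPcSet (G : SimpleGraph V) : Set (OutG G) :=
  {g | ∃ φ : MulAut (RAAG G), (QuotientGroup.mk φ : OutG G) = g ∧
    ((∃ x y ε, IsTransvection G φ x y ε) ∨ (∃ x ε Y, IsPartialConj G φ x ε Y))}

/-- The subgroup `N` of `Out(A_Γ)` generated by the images of all transvections and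
all non-inner partial conjugations. -/
def Ngrp (G : SimpleGraph V) : Subgroup (OutG G) := Subgroup.closure (TvPcSet G)

section RaagAux

variable {V : Type*} {G : SimpleGraph V}

theorem gen_commute_of_adj {a b : V} (h : G.Adj a b) :
    Commute (gen G a) (gen G b) := by
  rw [← commutatorElement_eq_one_iff_commute]
  have h1 : ⁅FreeGroup.of a, FreeGroup.of b⁆ ∈ Subgroup.normalClosure (raagRels G) :=
    Subgroup.subset_normalClosure ⟨a, b, h, rfl⟩
  have h2 : (PresentedGroup.mk (raagRels G)) ⁅FreeGroup.of a, FreeGroup.of b⁆ = 1 :=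
    (QuotientGroup.eq_one_iff _).2 h1
  rw [map_commutatorElement] at h2
  exact h2

open Classical in
/-- The map on generators inducing the transvection `y ↦ y * x ^ ε`. -/
noncomputable def tvFun (G : SimpleGraph V) (x y : V) (ε : ℤ) (z : V) : RAAG G :=
  if z = y then gen G y * (gen G x) ^ ε else gen G z

theorem tvFun_rels {x y : V} (hxy : x ≠ y) (hdom : Dominates G x y) (ε : ℤ) :
    ∀ r ∈ raagRels G, FreeGroup.lift (tvFun G x y ε) r = 1 := by
  have main : ∀ a b : V, G.Adj a b → b = y →
      Commute (tvFun G x y ε a) (tvFun G x y ε b) := by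
    intro a b hab hb
    have ha : a ≠ y := fun h => hab.ne (h.trans hb.symm)
    have hax : Commute (gen G a) ((gen G x) ^ ε) := by
      have hmem : a ∈ st G x := hdom (show a ∈ lk G y from hb ▸ hab.symm)
      rcases hmem with h | h
      · exact h ▸ (Commute.refl _).zpow_right ε
      · exact ((gen_commute_of_adj (show G.Adj x a from h)).symm).zpow_right ε
    have hay : Commute (gen G a) (gen G y) := gen_commute_of_adj (hb ▸ hab)
    rw [tvFun, tvFun, if_neg ha, if_pos hb]
    exact hay.mul_right hax
  have key : ∀ a b : V, G.Adj a b → Commute (tvFun G x y ε a) (tvFun G x y ε b) := by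
    intro a b hab
    by_cases hb : b = y
    · exact main a b hab hb
    · by_cases ha : a = y
      · exact (main b a hab.symm ha).symm
      · rw [tvFun, tvFun, if_neg ha, if_neg hb]
        exact gen_commute_of_adj hab
  rintro r ⟨a, b, hab, rfl⟩
  rw [map_commutatorElement, commutatorElement_eq_one_iff_commute]
  simpa using key a b hab

/-- The transvection `y ↦ y * x ^ ε` as an endomorphism. -/
noncomputable def tvHom {x y : V} (hxy : x ≠ y) (hdom : Dominates G x y) (ε : ℤ) : RAAG G →* RAAG G :=
  PresentedGroup.toGroup (tvFun_rels hxy hdom ε)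

theorem tvHom_gen {x y : V} (hxy : x ≠ y) (hdom : Dominates G x y) (ε : ℤ) (z : V) :
    tvHom hxy hdom ε (gen G z) = tvFun G x y ε z :=
  PresentedGroup.toGroup.of _

theorem tvHom_comp {x y : V} (hxy : x ≠ y) (hdom : Dominates G x y) (ε : ℤ) :
    (tvHom hxy hdom ε).comp (tvHom hxy hdom (-ε)) = MonoidHom.id _ := by
  ext z
  show tvHom hxy hdom ε (tvHom hxy hdom (-ε) (gen G z)) = gen G z
  rw [tvHom_gen, tvFun]
  by_cases hz : z = y
  · rw [if_pos hz, hz, map_mul, map_zpow, tvHom_gen, tvHom_gen, tvFun, tvFun,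
      if_pos rfl, if_neg hxy]
    rw [mul_assoc, ← zpow_add, add_neg_cancel, zpow_zero, mul_one]
  · rw [if_neg hz, tvHom_gen, tvFun, if_neg hz]

/-- The transvection `y ↦ y * x` as an automorphism. -/
noncomputable def tvAut {x y : V} (hxy : x ≠ y) (hdom : Dominates G x y) : MulAut (RAAG G) :=
  { toFun := tvHom hxy hdom 1
    invFun := tvHom hxy hdom (-1)
    left_inv := fun a => by
      have h := tvHom_comp hxy hdom (-1)
      rw [neg_neg] at h
      exact DFunLike.congr_fun h a
    right_inv := fun a => DFunLike.congr_fun (tvHom_comp hxy hdom 1) a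
    map_mul' := map_mul _ }

theorem tvAut_apply_gen {x y : V} (hxy : x ≠ y) (hdom : Dominates G x y) (z : V) :
    tvAut hxy hdom (gen G z) = tvFun G x y 1 z :=
  tvHom_gen hxy hdom 1 z

theorem tvAut_inv_apply_gen {x y : V} (hxy : x ≠ y) (hdom : Dominates G x y) (z : V) :
    (tvAut hxy hdom)⁻¹ (gen G z) = tvFun G x y (-1) z :=
  tvHom_gen hxy hdom (-1) z

/-- The abelianization map to the free abelian group on `V`. -/
theorem piFun_rels (G : SimpleGraph V) :
    ∀ r ∈ raagRels G,
      FreeGroup.lift (fun v => Multiplicative.ofAdd (Finsupp.single v (1 : ℤ))) r = 1 := by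
  rintro r ⟨a, b, hab, rfl⟩
  rw [map_commutatorElement, commutatorElement_eq_one_iff_commute]
  exact Commute.all _ _

noncomputable def piG (G : SimpleGraph V) : RAAG G →* Multiplicative (V →₀ ℤ) :=
  PresentedGroup.toGroup (piFun_rels G)

theorem piG_gen (v : V) : piG G (gen G v) = Multiplicative.ofAdd (Finsupp.single v (1 : ℤ)) :=
  PresentedGroup.toGroup.of _

end RaagAux
section AbelAux

variable {V : Type*} {G : SimpleGraph V}

/-- The induced endomorphism on the abelianization. -/
noncomputable def TE (G : SimpleGraph V) (φ : MulAut (RAAG G)) : AddMonoid.End (V →₀ ℤ) :=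
  Finsupp.liftAddHom fun v => zmultiplesHom _ ((piG G (φ (gen G v))).toAdd)

theorem TE_single (φ : MulAut (RAAG G)) (v : V) (n : ℤ) :
    TE G φ (Finsupp.single v n) = n • (piG G (φ (gen G v))).toAdd := by
  rw [TE]
  exact Finsupp.liftAddHom_apply_single _ _ _

theorem TE_pi (φ : MulAut (RAAG G)) (g : RAAG G) :
    TE G φ ((piG G g).toAdd) = (piG G (φ g)).toAdd := by
  have h : (AddMonoidHom.toMultiplicative (TE G φ)).comp (piG G)
      = (piG G).comp φ.toMonoidHom := by
    apply PresentedGroup.ext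
    intro v
    show AddMonoidHom.toMultiplicative (TE G φ) (piG G (gen G v)) = piG G (φ (gen G v))
    rw [piG_gen]
    show Multiplicative.ofAdd (TE G φ (Finsupp.single v 1)) = piG G (φ (gen G v))
    rw [TE_single, one_smul, ofAdd_toAdd]
  have h2 := DFunLike.congr_fun h g
  exact h2

theorem TE_one : TE G 1 = 1 := by
  apply Finsupp.addHom_ext
  intro v n
  show TE G 1 (Finsupp.single v n) = (1 : AddMonoid.End (V →₀ ℤ)) (Finsupp.single v n)
  rw [TE_single]
  show n • (piG G (gen G v)).toAdd = Finsupp.single v n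
  rw [piG_gen, toAdd_ofAdd, Finsupp.smul_single, smul_eq_mul, mul_one]

theorem TE_mul (φ ψ : MulAut (RAAG G)) : TE G (φ * ψ) = TE G φ * TE G ψ := by
  apply Finsupp.addHom_ext
  intro v n
  have h : (TE G φ * TE G ψ) (Finsupp.single v n) = TE G φ (TE G ψ (Finsupp.single v n)) := rfl
  show TE G (φ * ψ) (Finsupp.single v n) = (TE G φ * TE G ψ) (Finsupp.single v n)
  rw [h, TE_single, TE_single, map_zsmul, TE_pi, MulAut.mul_apply]

/-- The induced map on abelianizations, as a monoid hom to endomorphisms. -/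
noncomputable def Fmon (G : SimpleGraph V) : MulAut (RAAG G) →* AddMonoid.End (V →₀ ℤ) :=
  { toFun := TE G, map_one' := TE_one, map_mul' := TE_mul }

/-- The induced map landing in units. -/
noncomputable def FU (G : SimpleGraph V) : MulAut (RAAG G) →* (AddMonoid.End (V →₀ ℤ))ˣ :=
  (Units.map (Fmon G)).comp toUnits.toMonoidHom

theorem FU_val (φ : MulAut (RAAG G)) :
    ((FU G φ : (AddMonoid.End (V →₀ ℤ))ˣ) : AddMonoid.End (V →₀ ℤ)) = TE G φ := rfl

theorem FU_inn : ∀ φ ∈ Inn (RAAG G), FU G φ = 1 := by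
  rintro _ ⟨g, rfl⟩
  apply Units.ext
  rw [FU_val, Units.val_one]
  apply Finsupp.addHom_ext
  intro v n
  show TE G (MulAut.conj g) (Finsupp.single v n) = (1 : AddMonoid.End (V →₀ ℤ)) (Finsupp.single v n)
  rw [TE_single]
  have h : (MulAut.conj g) (gen G v) = g * gen G v * g⁻¹ := rfl
  have h2 : piG G (g * gen G v * g⁻¹) = piG G (gen G v) := by
    rw [map_mul, map_mul, map_inv, mul_comm (piG G g), mul_assoc, mul_inv_cancel, mul_one]
  rw [h, h2, piG_gen]
  show n • Finsupp.single v (1:ℤ) = Finsupp.single v n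
  rw [Finsupp.smul_single, smul_eq_mul, mul_one]

/-- The induced map on `Out`. -/
noncomputable def Fb (G : SimpleGraph V) : OutG G →* (AddMonoid.End (V →₀ ℤ))ˣ :=
  QuotientGroup.lift (Inn (RAAG G)) (FU G) FU_inn

theorem Fb_mk (φ : MulAut (RAAG G)) : Fb G (QuotientGroup.mk φ) = FU G φ := rfl

theorem TE_eq_of (φ : MulAut (RAAG G)) {y : V} (c : V →₀ ℤ)
    (hy : (piG G (φ (gen G y))).toAdd = Finsupp.single y 1 + c)
    (ho : ∀ v, v ≠ y → φ (gen G v) = gen G v) (w : V →₀ ℤ) :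
    TE G φ w = w + (w y) • c := by
  classical
  induction w using Finsupp.induction_linear with
  | zero => simp
  | add f g hf hg =>
    rw [map_add, hf, hg, Finsupp.add_apply, add_smul]
    abel
  | single v n =>
    rcases eq_or_ne v y with rfl | hv
    · rw [TE_single, hy, smul_add, Finsupp.smul_single, Finsupp.single_eq_same, smul_eq_mul,
        mul_one]
    · rw [TE_single, ho v hv, piG_gen, Finsupp.single_apply, if_neg hv,
        zero_smul, add_zero]
      simp [Finsupp.smul_single]

theorem TE_sq {y : V} {c : V →₀ ℤ} (f : AddMonoid.End (V →₀ ℤ)) (hc : c y = 0)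
    (hf : ∀ w, f w = w + (w y) • c) (w : V →₀ ℤ) : (f * f) w = w + (2 * w y) • c := by
  have h1 : (f * f) w = f (f w) := rfl
  rw [h1, hf, hf w, Finsupp.add_apply, Finsupp.smul_apply, hc, smul_zero, add_zero, two_mul,
    add_smul, add_assoc]

end AbelAux
section PingAux

open Pointwise

variable {V : Type*}

/-- The subgroup of units of the endomorphism monoid preserving the condition
"both coordinates at `x` and `y` vanish". -/
noncomputable def Sgrp (x y : V) : Subgroup (AddMonoid.End (V →₀ ℤ))ˣ where
  carrier := {u | ∀ w : V →₀ ℤ,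
    ((((u : (AddMonoid.End (V →₀ ℤ))ˣ) : AddMonoid.End (V →₀ ℤ)) w) x = 0 ∧
      (((u : (AddMonoid.End (V →₀ ℤ))ˣ) : AddMonoid.End (V →₀ ℤ)) w) y = 0) ↔
      (w x = 0 ∧ w y = 0)}
  one_mem' := by intro w; simp
  mul_mem' := by
    intro a b ha hb w
    have h : ((((a * b : (AddMonoid.End (V →₀ ℤ))ˣ) : AddMonoid.End (V →₀ ℤ))) w)
        = ((a : (AddMonoid.End (V →₀ ℤ))ˣ) : AddMonoid.End (V →₀ ℤ))
          (((b : (AddMonoid.End (V →₀ ℤ))ˣ) : AddMonoid.End (V →₀ ℤ)) w) := by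
      rw [Units.val_mul]; rfl
    rw [h]
    exact (ha _).trans (hb w)
  inv_mem' := by
    intro u hu w
    have e : ((u : AddMonoid.End (V →₀ ℤ)))
        (((u⁻¹ : (AddMonoid.End (V →₀ ℤ))ˣ) : AddMonoid.End (V →₀ ℤ)) w) = w := by
      have h : (((u * u⁻¹ : (AddMonoid.End (V →₀ ℤ))ˣ) : AddMonoid.End (V →₀ ℤ))) w = w := by
        rw [mul_inv_cancel, Units.val_one]; rfl
      rw [Units.val_mul] at h
      exact h
    have h2 := hu (((u⁻¹ : (AddMonoid.End (V →₀ ℤ))ˣ) : AddMonoid.End (V →₀ ℤ)) w)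
    rw [e] at h2
    exact h2.symm

/-- Nonzero-at-`x`-or-`y` finsupps: the set on which we play ping-pong. -/
def PingT (x y : V) := {w : V →₀ ℤ // ¬ (w x = 0 ∧ w y = 0)}

/-- The action of `Sgrp x y` on `PingT x y`. -/
noncomputable def pingAction (x y : V) : MulAction ↥(Sgrp x y) (PingT x y) where
  smul u w := ⟨(((u : (AddMonoid.End (V →₀ ℤ))ˣ) : AddMonoid.End (V →₀ ℤ))) w.1,
    fun h => w.2 ((u.2 w.1).mp h)⟩
  one_smul w := Subtype.ext (by
    show (((1 : (AddMonoid.End (V →₀ ℤ))ˣ) : AddMonoid.End (V →₀ ℤ))) w.1 = w.1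
    simp)
  mul_smul u v w := Subtype.ext (by
    show (((↑(u * v) : (AddMonoid.End (V →₀ ℤ))ˣ) : AddMonoid.End (V →₀ ℤ))) w.1
      = (((↑u : (AddMonoid.End (V →₀ ℤ))ˣ) : AddMonoid.End (V →₀ ℤ)))
        ((((↑v : (AddMonoid.End (V →₀ ℤ))ˣ) : AddMonoid.End (V →₀ ℤ))) w.1)
    rw [Subgroup.coe_mul, Units.val_mul]
    rfl)

end PingAux
section PingWrap

open Pointwise

/-- Ping-pong lemma with the index type in `Type 0` and the group in any universe. -/
theorem myPingPong.{u1, u2} {ι : Type} [Nontrivial ι] {G : Type u1} [Group G] (a : ι → G)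
    {α : Type u2} [MulAction G α] (X Y : ι → Set α)
    (hXne : ∀ i, (X i).Nonempty) (hXd : Pairwise (Function.onFun Disjoint X))
    (hYd : Pairwise (Function.onFun Disjoint Y)) (hXY : ∀ i j, Disjoint (X i) (Y j))
    (hX : ∀ i, a i • (Y i)ᶜ ⊆ X i) (hY : ∀ i, a⁻¹ i • (X i)ᶜ ⊆ Y i) :
    Function.Injective (FreeGroup.lift a) := by
  have hnt : Nontrivial (ULift.{u1} ι) := by
    obtain ⟨i, j, hij⟩ := exists_pair_ne ι
    exact ⟨⟨ULift.up i, ULift.up j, fun h => hij (congrArg ULift.down h)⟩⟩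
  have hinj' : Function.Injective
      (FreeGroup.lift (fun i : ULift.{u1} ι => a i.down)) := by
    refine FreeGroup.injective_lift_of_ping_pong (fun i : ULift.{u1} ι => a i.down)
      (fun i => X i.down) (fun i => Y i.down) (fun i => hXne i.down)
      (fun i j hij => hXd fun h => hij (ULift.down_injective h))
      (fun i j hij => hYd fun h => hij (ULift.down_injective h))
      (fun i j => hXY i.down j.down) (fun i => hX i.down) (fun i => hY i.down)
  have hcomp : FreeGroup.lift a
      = (FreeGroup.lift (fun i : ULift.{u1} ι => a i.down)).comp
        (FreeGroup.freeGroupCongr Equiv.ulift.symm).toMonoidHom := by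
    refine FreeGroup.ext_hom _ _ fun i => ?_
    simp
  rw [hcomp, MonoidHom.coe_comp]
  exact hinj'.comp (FreeGroup.freeGroupCongr Equiv.ulift.symm).injective

end PingWrap
open Pointwise in
/-- If `Γ` contains two distinct vertices `x, y` with `x ≥ y` and
`y ≥ x`, then `Out(A_Γ)` contains a free subgroup of rank 2. -/
theorem out_hasFreeRankTwo_of_domEquivPair [Fintype V] (G : SimpleGraph V) (x y : V)
    (hxy : x ≠ y) (h1 : Dominates G x y) (h2 : Dominates G y x) :
    HasFreeRankTwo (OutG G) := by
  classical
  set τ : MulAut (RAAG G) := tvAut hxy h1 with hτdef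
  set σ : MulAut (RAAG G) := tvAut hxy.symm h2 with hσdef
  -- coordinate facts
  have hxx : (Finsupp.single x (1:ℤ)) x = 1 := Finsupp.single_eq_same
  have hyy : (Finsupp.single y (1:ℤ)) y = 1 := Finsupp.single_eq_same
  have hcxy : (Finsupp.single x (1:ℤ)) y = 0 := Finsupp.single_eq_of_ne' hxy
  have hcyx : (Finsupp.single y (1:ℤ)) x = 0 := Finsupp.single_eq_of_ne' hxy.symm
  have cx : ∀ (w : V →₀ ℤ) (n : ℤ), (w + n • Finsupp.single x (1:ℤ)) x = w x + n := by
    intro w n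
    rw [Finsupp.add_apply, Finsupp.smul_apply, hxx, smul_eq_mul, mul_one]
  have cy : ∀ (w : V →₀ ℤ) (n : ℤ), (w + n • Finsupp.single x (1:ℤ)) y = w y := by
    intro w n
    rw [Finsupp.add_apply, Finsupp.smul_apply, hcxy, smul_eq_mul, mul_zero, add_zero]
  have dx : ∀ (w : V →₀ ℤ) (n : ℤ), (w + n • Finsupp.single y (1:ℤ)) x = w x := by
    intro w n
    rw [Finsupp.add_apply, Finsupp.smul_apply, hcyx, smul_eq_mul, mul_zero, add_zero]
  have dy : ∀ (w : V →₀ ℤ) (n : ℤ), (w + n • Finsupp.single y (1:ℤ)) y = w y + n := by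
    intro w n
    rw [Finsupp.add_apply, Finsupp.smul_apply, hyy, smul_eq_mul, mul_one]
  -- abelianized action formulas
  have hτf : ∀ w : V →₀ ℤ, TE G τ w = w + (w y) • Finsupp.single x 1 := by
    intro w
    refine TE_eq_of τ (Finsupp.single x 1) ?_ ?_ w
    · rw [hτdef, tvAut_apply_gen, tvFun, if_pos rfl, zpow_one, map_mul, piG_gen, piG_gen,
        toAdd_mul, toAdd_ofAdd, toAdd_ofAdd]
    · intro v hv
      rw [hτdef, tvAut_apply_gen, tvFun, if_neg hv]
  have hτif : ∀ w : V →₀ ℤ, TE G τ⁻¹ w = w + (w y) • (-(Finsupp.single x 1)) := by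
    intro w
    refine TE_eq_of τ⁻¹ (-(Finsupp.single x 1)) ?_ ?_ w
    · rw [hτdef, tvAut_inv_apply_gen, tvFun, if_pos rfl, map_mul, map_zpow, piG_gen, piG_gen,
        zpow_neg_one, toAdd_mul, toAdd_inv, toAdd_ofAdd, toAdd_ofAdd]
    · intro v hv
      rw [hτdef, tvAut_inv_apply_gen, tvFun, if_neg hv]
  have hσf : ∀ w : V →₀ ℤ, TE G σ w = w + (w x) • Finsupp.single y 1 := by
    intro w
    refine TE_eq_of σ (y := x) (Finsupp.single y 1) ?_ ?_ w
    · rw [hσdef, tvAut_apply_gen, tvFun, if_pos rfl, zpow_one, map_mul, piG_gen, piG_gen,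
        toAdd_mul, toAdd_ofAdd, toAdd_ofAdd]
    · intro v hv
      rw [hσdef, tvAut_apply_gen, tvFun, if_neg hv]
  have hσif : ∀ w : V →₀ ℤ, TE G σ⁻¹ w = w + (w x) • (-(Finsupp.single y 1)) := by
    intro w
    refine TE_eq_of σ⁻¹ (y := x) (-(Finsupp.single y 1)) ?_ ?_ w
    · rw [hσdef, tvAut_inv_apply_gen, tvFun, if_pos rfl, map_mul, map_zpow, piG_gen, piG_gen,
        zpow_neg_one, toAdd_mul, toAdd_inv, toAdd_ofAdd, toAdd_ofAdd]
    · intro v hv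
      rw [hσdef, tvAut_inv_apply_gen, tvFun, if_neg hv]
  -- the squared transvections, as units of the endomorphism monoid
  set u2 : (AddMonoid.End (V →₀ ℤ))ˣ := FU G (τ * τ) with hu2def
  set v2 : (AddMonoid.End (V →₀ ℤ))ˣ := FU G (σ * σ) with hv2def
  have hu2 : ∀ w : V →₀ ℤ,
      (u2 : AddMonoid.End (V →₀ ℤ)) w = w + (2 * w y) • Finsupp.single x 1 := by
    intro w
    rw [hu2def, FU_val, TE_mul]
    exact TE_sq _ hcxy hτf w
  have hu2i : ∀ w : V →₀ ℤ,
      ((u2⁻¹ : (AddMonoid.End (V →₀ ℤ))ˣ) : AddMonoid.End (V →₀ ℤ)) w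
        = w + (-(2 * w y)) • Finsupp.single x 1 := by
    intro w
    have hneg : ((-(Finsupp.single x (1:ℤ))) : V →₀ ℤ) y = 0 := by
      rw [Finsupp.neg_apply, hcxy, neg_zero]
    rw [hu2def, ← map_inv, FU_val, mul_inv_rev, TE_mul, TE_sq _ hneg hτif w, smul_neg, ← neg_smul]
  have hv2 : ∀ w : V →₀ ℤ,
      (v2 : AddMonoid.End (V →₀ ℤ)) w = w + (2 * w x) • Finsupp.single y 1 := by
    intro w
    rw [hv2def, FU_val, TE_mul]
    exact TE_sq _ hcyx hσf w
  have hv2i : ∀ w : V →₀ ℤ,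
      ((v2⁻¹ : (AddMonoid.End (V →₀ ℤ))ˣ) : AddMonoid.End (V →₀ ℤ)) w
        = w + (-(2 * w x)) • Finsupp.single y 1 := by
    intro w
    have hneg : ((-(Finsupp.single y (1:ℤ))) : V →₀ ℤ) x = 0 := by
      rw [Finsupp.neg_apply, hcyx, neg_zero]
    rw [hv2def, ← map_inv, FU_val, mul_inv_rev, TE_mul, TE_sq _ hneg hσif w, smul_neg, ← neg_smul]
  -- membership in the subgroup
  have hu2S : u2 ∈ Sgrp x y := by
    intro w
    rw [hu2 w, cx, cy]
    omega
  have hv2S : v2 ∈ Sgrp x y := by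
    intro w
    rw [hv2 w, dx, dy]
    omega
  -- the ping-pong action
  letI := pingAction x y
  set a : Fin 2 → ↥(Sgrp x y) := ![⟨u2, hu2S⟩, ⟨v2, hv2S⟩] with hadef
  have ha0 : a 0 = ⟨u2, hu2S⟩ := by rw [hadef]; simp
  have ha1 : a 1 = ⟨v2, hv2S⟩ := by rw [hadef]; simp
  -- the ping-pong sets
  set X : Fin 2 → Set (PingT x y) := ![
    {w | (w.1 y).natAbs < (w.1 x).natAbs ∧ (0 ≤ w.1 x ∧ 0 ≤ w.1 y ∨ w.1 x ≤ 0 ∧ w.1 y ≤ 0)},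
    {w | ((w.1 x).natAbs < (w.1 y).natAbs ∧ (0 ≤ w.1 x ∧ 0 ≤ w.1 y ∨ w.1 x ≤ 0 ∧ w.1 y ≤ 0)) ∨
        (w.1 x = w.1 y ∧ w.1 x ≠ 0)}] with hXdef
  set Y : Fin 2 → Set (PingT x y) := ![
    {w | (w.1 y).natAbs ≤ (w.1 x).natAbs ∧ (0 < w.1 x ∧ w.1 y < 0 ∨ w.1 x < 0 ∧ 0 < w.1 y)},
    {w | (w.1 x).natAbs < (w.1 y).natAbs ∧ (0 < w.1 x ∧ w.1 y < 0 ∨ w.1 x < 0 ∧ 0 < w.1 y)}]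
    with hYdef
  have hX0 : X 0 = {w | (w.1 y).natAbs < (w.1 x).natAbs ∧
      (0 ≤ w.1 x ∧ 0 ≤ w.1 y ∨ w.1 x ≤ 0 ∧ w.1 y ≤ 0)} := by rw [hXdef]; simp
  have hX1 : X 1 = {w | ((w.1 x).natAbs < (w.1 y).natAbs ∧
      (0 ≤ w.1 x ∧ 0 ≤ w.1 y ∨ w.1 x ≤ 0 ∧ w.1 y ≤ 0)) ∨ (w.1 x = w.1 y ∧ w.1 x ≠ 0)} := by
    rw [hXdef]; simp
  have hY0 : Y 0 = {w | (w.1 y).natAbs ≤ (w.1 x).natAbs ∧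
      (0 < w.1 x ∧ w.1 y < 0 ∨ w.1 x < 0 ∧ 0 < w.1 y)} := by rw [hYdef]; simp
  have hY1 : Y 1 = {w | (w.1 x).natAbs < (w.1 y).natAbs ∧
      (0 < w.1 x ∧ w.1 y < 0 ∨ w.1 x < 0 ∧ 0 < w.1 y)} := by rw [hYdef]; simp
  -- action coordinates
  have hsmul0 : ∀ w : PingT x y,
      (a 0 • w).1 = w.1 + (2 * w.1 y) • Finsupp.single x 1 := by
    intro w
    have h : (a 0 • w).1
        = (((a 0 : ↥(Sgrp x y)) : (AddMonoid.End (V →₀ ℤ))ˣ) : AddMonoid.End (V →₀ ℤ)) w.1 := rfl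
    rw [h, ha0]
    exact hu2 w.1
  have hsmul0i : ∀ w : PingT x y,
      ((a 0)⁻¹ • w).1 = w.1 + (-(2 * w.1 y)) • Finsupp.single x 1 := by
    intro w
    have h : ((a 0)⁻¹ • w).1
        = ((((a 0)⁻¹ : ↥(Sgrp x y)) : (AddMonoid.End (V →₀ ℤ))ˣ) : AddMonoid.End (V →₀ ℤ)) w.1 :=
      rfl
    have hval : (((a 0)⁻¹ : ↥(Sgrp x y)) : (AddMonoid.End (V →₀ ℤ))ˣ) = u2⁻¹ := by rw [ha0]; rfl
    rw [h, hval]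
    exact hu2i w.1
  have hsmul1 : ∀ w : PingT x y,
      (a 1 • w).1 = w.1 + (2 * w.1 x) • Finsupp.single y 1 := by
    intro w
    have h : (a 1 • w).1
        = (((a 1 : ↥(Sgrp x y)) : (AddMonoid.End (V →₀ ℤ))ˣ) : AddMonoid.End (V →₀ ℤ)) w.1 := rfl
    rw [h, ha1]
    exact hv2 w.1
  have hsmul1i : ∀ w : PingT x y,
      ((a 1)⁻¹ • w).1 = w.1 + (-(2 * w.1 x)) • Finsupp.single y 1 := by
    intro w
    have h : ((a 1)⁻¹ • w).1
        = ((((a 1)⁻¹ : ↥(Sgrp x y)) : (AddMonoid.End (V →₀ ℤ))ˣ) : AddMonoid.End (V →₀ ℤ)) w.1 :=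
      rfl
    have hval : (((a 1)⁻¹ : ↥(Sgrp x y)) : (AddMonoid.End (V →₀ ℤ))ˣ) = v2⁻¹ := by rw [ha1]; rfl
    rw [h, hval]
    exact hv2i w.1
  -- ping-pong hypotheses
  have hXne : ∀ i, (X i).Nonempty := by
    refine Fin.forall_fin_two.mpr ⟨?_, ?_⟩
    · refine ⟨⟨Finsupp.single x 1, fun h => ?_⟩, ?_⟩
      · rw [hxx] at h; exact one_ne_zero h.1
      · rw [hX0]; refine Set.mem_setOf_eq.mpr ?_
        simp only [hxx, hcxy]
        norm_num
    · refine ⟨⟨Finsupp.single y 1, fun h => ?_⟩, ?_⟩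
      · rw [hyy] at h; exact one_ne_zero h.2
      · rw [hX1]; refine Set.mem_setOf_eq.mpr ?_
        simp only [hyy, hcyx]
        norm_num
  have hXd : Pairwise (Function.onFun Disjoint X) := by
    have h : ∀ i j : Fin 2, i ≠ j → Disjoint (X i) (X j) := by
      refine Fin.forall_fin_two.mpr ⟨Fin.forall_fin_two.mpr ⟨?_, ?_⟩,
        Fin.forall_fin_two.mpr ⟨?_, ?_⟩⟩ <;> intro hij
      · exact absurd rfl hij
      · refine Set.disjoint_left.mpr fun z hz1 hz2 => ?_
        rw [hX0, Set.mem_setOf_eq] at hz1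
        rw [hX1, Set.mem_setOf_eq] at hz2
        omega
      · refine Set.disjoint_left.mpr fun z hz1 hz2 => ?_
        rw [hX1, Set.mem_setOf_eq] at hz1
        rw [hX0, Set.mem_setOf_eq] at hz2
        omega
      · exact absurd rfl hij
    exact fun i j hij => h i j hij
  have hYd : Pairwise (Function.onFun Disjoint Y) := by
    have h : ∀ i j : Fin 2, i ≠ j → Disjoint (Y i) (Y j) := by
      refine Fin.forall_fin_two.mpr ⟨Fin.forall_fin_two.mpr ⟨?_, ?_⟩,
        Fin.forall_fin_two.mpr ⟨?_, ?_⟩⟩ <;> intro hij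
      · exact absurd rfl hij
      · refine Set.disjoint_left.mpr fun z hz1 hz2 => ?_
        rw [hY0, Set.mem_setOf_eq] at hz1
        rw [hY1, Set.mem_setOf_eq] at hz2
        omega
      · refine Set.disjoint_left.mpr fun z hz1 hz2 => ?_
        rw [hY1, Set.mem_setOf_eq] at hz1
        rw [hY0, Set.mem_setOf_eq] at hz2
        omega
      · exact absurd rfl hij
    exact fun i j hij => h i j hij
  have hXYd : ∀ i j, Disjoint (X i) (Y j) := by
    refine Fin.forall_fin_two.mpr ⟨Fin.forall_fin_two.mpr ⟨?_, ?_⟩,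
      Fin.forall_fin_two.mpr ⟨?_, ?_⟩⟩
    · refine Set.disjoint_left.mpr fun z hz1 hz2 => ?_
      rw [hX0, Set.mem_setOf_eq] at hz1
      rw [hY0, Set.mem_setOf_eq] at hz2
      omega
    · refine Set.disjoint_left.mpr fun z hz1 hz2 => ?_
      rw [hX0, Set.mem_setOf_eq] at hz1
      rw [hY1, Set.mem_setOf_eq] at hz2
      omega
    · refine Set.disjoint_left.mpr fun z hz1 hz2 => ?_
      rw [hX1, Set.mem_setOf_eq] at hz1
      rw [hY0, Set.mem_setOf_eq] at hz2
      omega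
    · refine Set.disjoint_left.mpr fun z hz1 hz2 => ?_
      rw [hX1, Set.mem_setOf_eq] at hz1
      rw [hY1, Set.mem_setOf_eq] at hz2
      omega
  have hXping : ∀ i, a i • (Y i)ᶜ ⊆ X i := by
    refine Fin.forall_fin_two.mpr ⟨?_, ?_⟩
    · intro z hz
      obtain ⟨w, hw, rfl⟩ := Set.mem_smul_set.mp hz
      rw [Set.mem_compl_iff, hY0, Set.mem_setOf_eq] at hw
      have hwp := w.2
      rw [hX0, Set.mem_setOf_eq, hsmul0 w, cx, cy]
      omega
    · intro z hz
      obtain ⟨w, hw, rfl⟩ := Set.mem_smul_set.mp hz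
      rw [Set.mem_compl_iff, hY1, Set.mem_setOf_eq] at hw
      have hwp := w.2
      rw [hX1, Set.mem_setOf_eq, hsmul1 w, dx, dy]
      omega
  have hYping : ∀ i, a⁻¹ i • (X i)ᶜ ⊆ Y i := by
    refine Fin.forall_fin_two.mpr ⟨?_, ?_⟩
    · intro z hz
      rw [Pi.inv_apply] at hz
      obtain ⟨w, hw, rfl⟩ := Set.mem_smul_set.mp hz
      rw [Set.mem_compl_iff, hX0, Set.mem_setOf_eq] at hw
      have hwp := w.2
      rw [hY0, Set.mem_setOf_eq, hsmul0i w, cx, cy]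
      omega
    · intro z hz
      rw [Pi.inv_apply] at hz
      obtain ⟨w, hw, rfl⟩ := Set.mem_smul_set.mp hz
      rw [Set.mem_compl_iff, hX1, Set.mem_setOf_eq] at hw
      have hwp := w.2
      rw [hY1, Set.mem_setOf_eq, hsmul1i w, dx, dy]
      omega
  have hinj : Function.Injective (FreeGroup.lift a) := by
    refine myPingPong a X Y hXne hXd hYd hXYd ?_ ?_
    · exact hXping
    · exact hYping
  -- transfer to `Out`
  set b : Fin 2 → OutG G :=
    ![(QuotientGroup.mk (τ * τ) : OutG G), (QuotientGroup.mk (σ * σ) : OutG G)] with hbdef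
  have hb0 : b 0 = (QuotientGroup.mk (τ * τ) : OutG G) := by rw [hbdef]; simp
  have hb1 : b 1 = (QuotientGroup.mk (σ * σ) : OutG G) := by rw [hbdef]; simp
  have hcomp : ((Sgrp x y).subtype).comp (FreeGroup.lift a)
      = (Fb G).comp (FreeGroup.lift b) := by
    refine FreeGroup.ext_hom _ _ (Fin.forall_fin_two.mpr ⟨?_, ?_⟩)
    · rw [MonoidHom.comp_apply, MonoidHom.comp_apply, FreeGroup.lift_apply_of, FreeGroup.lift_apply_of,
        ha0, hb0]
      show u2 = Fb G (QuotientGroup.mk (τ * τ))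
      rw [Fb_mk, hu2def]
    · rw [MonoidHom.comp_apply, MonoidHom.comp_apply, FreeGroup.lift_apply_of, FreeGroup.lift_apply_of,
        ha1, hb1]
      show v2 = Fb G (QuotientGroup.mk (σ * σ))
      rw [Fb_mk, hv2def]
  have hbinj : Function.Injective (FreeGroup.lift b) := by
    have hsa : Function.Injective (((Sgrp x y).subtype).comp (FreeGroup.lift a)) := by
      rw [MonoidHom.coe_comp]
      exact (Subgroup.subtype_injective _).comp hinj
    rw [hcomp, MonoidHom.coe_comp] at hsa
    exact Function.Injective.of_comp hsa
  exact ⟨(FreeGroup.lift b).range, ⟨(MonoidHom.ofInjective hbinj).symm⟩⟩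
end

section
/- If the finite simplicial graph Γ contains a separating intersection of links, then Out(A_Γ) contains a subgroup isomorphic to the free group of rank 2. -/
open SimpleGraph
open scoped commutatorElement

variable {V : Type*}

namespace SILAux



open FreeGroup

variable {α : Type*} [DecidableEq α]

/-- A word is reduced iff no adjacent cancelling pair. -/
def IsRed (L : List (α × Bool)) : Prop :=
  List.IsChain (fun a b => ¬(a.1 = b.1 ∧ a.2 = !b.2)) L

theorem reduce_eq_self {L : List (α × Bool)} (h : IsRed L) : FreeGroup.reduce L = L := by
  induction L with
  | nil => rfl
  | cons a L ih =>
    have hL : IsRed L := h.tail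
    rw [FreeGroup.reduce.cons, ih hL]
    cases L with
    | nil => rfl
    | cons b L' =>
      have : ¬(a.1 = b.1 ∧ a.2 = !b.2) := (List.isChain_cons_cons.1 h).1
      simp [this]

theorem isRed_reduce (L : List (α × Bool)) : IsRed (FreeGroup.reduce L) := by
  induction L with
  | nil => exact List.isChain_nil
  | cons a L ih =>
    rw [FreeGroup.reduce.cons]
    cases h : FreeGroup.reduce L with
    | nil => simp [IsRed]
    | cons b L' =>
      rw [h] at ih
      show IsRed (if a.1 = b.1 ∧ a.2 = !b.2 then L' else a :: b :: L')
      by_cases hc : a.1 = b.1 ∧ a.2 = !b.2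
      · rw [if_pos hc]; exact ih.tail
      · rw [if_neg hc]; exact List.isChain_cons_cons.2 ⟨hc, ih⟩

theorem isRed_toWord (g : FreeGroup α) : IsRed g.toWord := by
  rw [← FreeGroup.reduce_toWord]; exact isRed_reduce _

theorem toWord_mk_isRed {L : List (α × Bool)} (h : IsRed L) : (FreeGroup.mk L).toWord = L := by
  rw [FreeGroup.toWord_mk, reduce_eq_self h]

theorem eq_zpow_of_commute_aux {i : α} :
    ∀ n (g : FreeGroup α), g.toWord.length = n → Commute g (FreeGroup.of i) →
      ∃ m : ℤ, g = FreeGroup.of i ^ m := by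
  intro n
  induction n using Nat.strong_induction_on with
  | _ n ih =>
    intro g hn hc
    rcases List.eq_nil_or_concat g.toWord with h0 | ⟨L, ⟨j, b⟩, hL⟩
    · exact ⟨0, by rw [FreeGroup.toWord_eq_nil_iff.1 h0, zpow_zero]⟩
    · rw [List.concat_eq_append] at hL
      have hred : IsRed (L ++ [(j, b)]) := by rw [← hL]; exact isRed_toWord g
      have hg : g = FreeGroup.mk L * FreeGroup.mk [(j, b)] := by
        rw [FreeGroup.mul_mk, ← hL, FreeGroup.mk_toWord]
      by_cases hji : j = i
      · subst hji
        have hredL : IsRed L := hred.prefix ⟨[(j, b)], rfl⟩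
        have hlen : (FreeGroup.mk L).toWord.length = L.length := by
          rw [toWord_mk_isRed hredL]
        have hlt : L.length < n := by
          rw [← hn, hL]; simp
        have hsingle : FreeGroup.mk [(j, b)] = FreeGroup.of j ^ (if b then (1 : ℤ) else -1) := by
          cases b
          · show FreeGroup.mk [(j, false)] = FreeGroup.of j ^ (-1 : ℤ)
            rw [zpow_neg_one]
            show FreeGroup.mk [(j, false)] = (FreeGroup.mk [(j, true)])⁻¹
            rw [FreeGroup.inv_mk]
            rfl
          · show FreeGroup.mk [(j, true)] = FreeGroup.of j ^ (1 : ℤ)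
            rw [zpow_one]; rfl
        have hcs : Commute (FreeGroup.mk [(j, b)]) (FreeGroup.of j) := by
          rw [hsingle]; exact (Commute.refl _).zpow_left _
        have hc' : Commute (FreeGroup.mk L) (FreeGroup.of j) := by
          have : FreeGroup.mk L = g * (FreeGroup.mk [(j, b)])⁻¹ := by
            rw [hg]; group
          rw [this]
          exact hc.mul_left hcs.inv_left
        obtain ⟨m, hm⟩ := ih L.length hlt _ hlen hc'
        refine ⟨m + (if b then 1 else -1), ?_⟩
        rw [hg, hm, hsingle, ← zpow_add]
      · exfalso
        set W := g.toWord with hW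
        set f : α × Bool → α × Bool := fun p => (p.1, !p.2) with hf
        have hbig : g * FreeGroup.of i * g⁻¹ =
            FreeGroup.mk (W ++ [(i, true)] ++ FreeGroup.invRev W) := by
          rw [← FreeGroup.mul_mk, ← FreeGroup.mul_mk, ← FreeGroup.inv_mk, FreeGroup.mk_toWord]
          rfl
        have hinvred : IsRed (FreeGroup.invRev W) := by
          unfold FreeGroup.invRev
          rw [IsRed, List.isChain_reverse, List.isChain_map]
          refine (isRed_toWord g).imp ?_
          rintro a c hac ⟨h1, h2⟩
          exact hac ⟨h1.symm, by simp at h2; rw [h2, Bool.not_not]⟩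
        have hredbig : IsRed (W ++ [(i, true)] ++ FreeGroup.invRev W) := by
          rw [IsRed, List.isChain_append, List.isChain_append]
          refine ⟨⟨isRed_toWord g, List.isChain_singleton _, ?_⟩, hinvred, ?_⟩
          · intro p hp q hq
            rw [hL, List.getLast?_concat] at hp
            simp only [List.head?_cons, Option.mem_def, Option.some.injEq] at hp hq
            rw [← hp, ← hq]
            rintro ⟨h1, -⟩
            exact hji h1
          · intro p hp q hq
            rw [List.getLast?_concat] at hp
            have hq' : q = (j, !b) := by
              unfold FreeGroup.invRev at hq
              rw [List.head?_reverse, hL] at hq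
              simp at hq
              simp [hq]
            simp only [Option.mem_def, Option.some.injEq] at hp
            rw [← hp, hq']
            rintro ⟨h1, -⟩
            exact hji h1.symm
        have heq : g * FreeGroup.of i * g⁻¹ = FreeGroup.of i := by
          rw [hc.eq, mul_inv_cancel_right]
        have hlist : W ++ [(i, true)] ++ FreeGroup.invRev W = [(i, true)] := by
          have := congrArg FreeGroup.toWord (hbig.symm.trans heq)
          rw [toWord_mk_isRed hredbig, FreeGroup.toWord_of] at this
          exact this
        have := congrArg List.length hlist
        simp only [List.length_append, FreeGroup.invRev_length, List.length_cons,
          List.length_nil] at this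
        have hW1 : 1 ≤ W.length := by rw [hL]; simp
        omega

theorem eq_zpow_of_commute {i : α} {g : FreeGroup α} (hc : Commute g (FreeGroup.of i)) :
    ∃ m : ℤ, g = FreeGroup.of i ^ m :=
  eq_zpow_of_commute_aux _ g rfl hc

/-- Exponent-sum homomorphism at a letter. -/
def expHom (i : α) : FreeGroup α →* Multiplicative ℤ :=
  FreeGroup.lift fun j => Multiplicative.ofAdd (if j = i then (1 : ℤ) else 0)

theorem expHom_of_pow (i j : α) (m : ℤ) :
    expHom i (FreeGroup.of j ^ m) = Multiplicative.ofAdd (if j = i then m else 0) := by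
  rw [map_zpow, expHom, FreeGroup.lift_apply_of]
  split_ifs
  · rw [← ofAdd_zsmul, smul_eq_mul, mul_one]
  · simp

theorem eq_one_of_commute_two {i j : α} (hij : i ≠ j) {g : FreeGroup α}
    (h1 : Commute g (FreeGroup.of i)) (h2 : Commute g (FreeGroup.of j)) : g = 1 := by
  obtain ⟨m, rfl⟩ := eq_zpow_of_commute h1
  obtain ⟨k, hk⟩ := eq_zpow_of_commute h2
  have h3 := congrArg (expHom j) hk
  rw [expHom_of_pow, expHom_of_pow, if_neg hij, if_pos rfl] at h3
  have hk0 : k = 0 := by simpa using h3.symm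
  rw [hk, hk0, zpow_zero]


section RaagAux

attribute [local instance] Classical.propDecidable

variable {V : Type*} (G : SimpleGraph V)

theorem raag_commute {u v : V} (h : G.Adj u v) : Commute (gen G u) (gen G v) := by
  have hmem : (⁅FreeGroup.of u, FreeGroup.of v⁆ : FreeGroup V) ∈
      Subgroup.normalClosure (raagRels G) :=
    Subgroup.subset_normalClosure ⟨u, v, h, rfl⟩
  have h1 : (PresentedGroup.mk (raagRels G)) ⁅FreeGroup.of u, FreeGroup.of v⁆ = 1 :=
    (QuotientGroup.eq_one_iff _).2 hmem
  rw [map_commutatorElement] at h1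
  exact commutatorElement_eq_one_iff_commute.1 h1

variable (C : Set V)

/-- The generator images of a partial conjugation by `w` on `C`. -/
noncomputable def pcFun (w : RAAG G) : V → RAAG G :=
  fun v => if v ∈ C then w⁻¹ * gen G v * w else gen G v

theorem pc_rels (w : RAAG G)
    (hmix : ∀ u v : V, G.Adj u v → u ∈ C → v ∉ C → Commute w (gen G v)) :
    ∀ r ∈ raagRels G, FreeGroup.lift (pcFun G C w) r = 1 := by
  rintro r ⟨u, v, huv, rfl⟩
  rw [map_commutatorElement, FreeGroup.lift_apply_of, FreeGroup.lift_apply_of]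
  apply commutatorElement_eq_one_iff_commute.2
  unfold pcFun
  have hcomm := raag_commute G huv
  by_cases hu : u ∈ C <;> by_cases hv : v ∈ C
  · rw [if_pos hu, if_pos hv]
    have h2 := hcomm.map (MulAut.conj w⁻¹)
    simp only [MulAut.conj_apply, inv_inv] at h2
    exact h2
  · rw [if_pos hu, if_neg hv]
    exact Commute.mul_left (Commute.mul_left (hmix u v huv hu hv).inv_left hcomm)
      (hmix u v huv hu hv)
  · rw [if_neg hu, if_pos hv]
    exact (Commute.mul_left (Commute.mul_left (hmix v u huv.symm hv hu).inv_left hcomm.symm)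
      (hmix v u huv.symm hv hu)).symm
  · rw [if_neg hu, if_neg hv]
    exact hcomm

/-- Partial conjugation by `w` on `C` as an endomorphism. -/
noncomputable def pcHom (w : RAAG G)
    (hmix : ∀ u v : V, G.Adj u v → u ∈ C → v ∉ C → Commute w (gen G v)) :
    RAAG G →* RAAG G :=
  PresentedGroup.toGroup (pc_rels G C w hmix)

theorem pcHom_gen (w : RAAG G) (hmix) (v : V) :
    pcHom G C w hmix (gen G v) = if v ∈ C then w⁻¹ * gen G v * w else gen G v :=
  PresentedGroup.toGroup.of _

theorem hmix_inv (w : RAAG G)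
    (hmix : ∀ u v : V, G.Adj u v → u ∈ C → v ∉ C → Commute w (gen G v)) :
    ∀ u v : V, G.Adj u v → u ∈ C → v ∉ C → Commute w⁻¹ (gen G v) :=
  fun u v h hu hv => (hmix u v h hu hv).inv_left

/-- Partial conjugation by a generator on `C` as an automorphism. -/
noncomputable def pcAut (a : V) (ha : a ∉ C)
    (hmix : ∀ u v : V, G.Adj u v → u ∈ C → v ∉ C → Commute (gen G a) (gen G v)) :
    MulAut (RAAG G) :=
  MonoidHom.toMulEquiv (pcHom G C (gen G a) hmix)
    (pcHom G C (gen G a)⁻¹ (hmix_inv G C _ hmix))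
    (by
      refine PresentedGroup.ext fun v => ?_
      show pcHom G C (gen G a)⁻¹ (hmix_inv G C _ hmix)
        (pcHom G C (gen G a) hmix (gen G v)) = gen G v
      rw [pcHom_gen]
      by_cases hv : v ∈ C
      · rw [if_pos hv]
        simp only [_root_.map_mul, _root_.map_inv, pcHom_gen, if_pos hv, if_neg ha, inv_inv]
        group
      · rw [if_neg hv, pcHom_gen, if_neg hv])
    (by
      refine PresentedGroup.ext fun v => ?_
      show pcHom G C (gen G a) hmix
        (pcHom G C (gen G a)⁻¹ (hmix_inv G C _ hmix) (gen G v)) = gen G v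
      rw [pcHom_gen]
      by_cases hv : v ∈ C
      · rw [if_pos hv]
        simp only [_root_.map_mul, _root_.map_inv, pcHom_gen, if_pos hv, if_neg ha, inv_inv]
        group
      · rw [if_neg hv, pcHom_gen, if_neg hv])

theorem pcAut_gen (a : V) (ha : a ∉ C) (hmix) (v : V) :
    pcAut G C a ha hmix (gen G v) =
      if v ∈ C then (gen G a)⁻¹ * gen G v * gen G a else gen G v :=
  pcHom_gen G C (gen G a) hmix v

/-- The images of the two free generators in the RAAG. -/
noncomputable def muHom (x y : V) : FreeGroup (Fin 2) →* RAAG G :=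
  FreeGroup.lift fun j : Fin 2 => if j = 0 then gen G x else gen G y

theorem fix_mu (x y : V) (ψ : MulAut (RAAG G)) (hx : ψ (gen G x) = gen G x)
    (hy : ψ (gen G y) = gen G y) (u : FreeGroup (Fin 2)) :
    ψ (muHom G x y u) = muHom G x y u := by
  have hcomp : (ψ.toMonoidHom.comp (muHom G x y)) = muHom G x y := by
    refine FreeGroup.ext_hom _ _ fun j => ?_
    by_cases hj : j = 0 <;>
      simp [muHom, FreeGroup.lift_apply_of, hj, hx, hy]
  exact DFunLike.congr_fun hcomp u

theorem key_lemma (x y : V) (hx : x ∉ C) (hy : y ∉ C)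
    (φx φy : MulAut (RAAG G))
    (hφx : ∀ v, φx (gen G v) = if v ∈ C then (gen G x)⁻¹ * gen G v * gen G x else gen G v)
    (hφy : ∀ v, φy (gen G v) = if v ∈ C then (gen G y)⁻¹ * gen G v * gen G y else gen G v)
    (w : FreeGroup (Fin 2)) :
    (∀ v, v ∉ C →
        (FreeGroup.lift (fun j : Fin 2 => if j = 0 then φx else φy) w) (gen G v) = gen G v) ∧
      (∀ v, v ∈ C →
        (FreeGroup.lift (fun j : Fin 2 => if j = 0 then φx else φy) w) (gen G v) =
          (muHom G x y w)⁻¹ * gen G v * muHom G x y w) := by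
  set Φ := FreeGroup.lift (fun j : Fin 2 => if j = 0 then φx else φy) with hΦ
  have hpure : ∀ j : Fin 2, (pure j : FreeGroup (Fin 2)) = FreeGroup.of j := fun _ => rfl
  induction w with
  | C1 =>
    constructor <;> intro v hv <;> simp [_root_.map_one, MulAut.one_apply]
  | of j =>
    rw [← hpure j]
    have hofj : Φ (pure j) = if j = 0 then φx else φy := FreeGroup.lift_apply_of
    have hmuj : muHom G x y (pure j) = if j = 0 then gen G x else gen G y :=
      FreeGroup.lift_apply_of
    constructor
    · intro v hv
      rw [hofj]
      by_cases hj : j = 0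
      · rw [if_pos hj, hφx, if_neg hv]
      · rw [if_neg hj, hφy, if_neg hv]
    · intro v hv
      rw [hofj, hmuj]
      by_cases hj : j = 0
      · simp only [if_pos hj]
        rw [hφx, if_pos hv]
      · simp only [if_neg hj]
        rw [hφy, if_pos hv]
  | inv_of j ih =>
    rw [← hpure j] at ih ⊢
    have hinv : Φ ((pure j : FreeGroup (Fin 2)))⁻¹ = (Φ (pure j))⁻¹ := _root_.map_inv _ _
    have happ : ∀ u : RAAG G, (Φ (pure j))⁻¹ (Φ (pure j) u) = u := fun u => by
      rw [← MulAut.mul_apply, inv_mul_cancel, MulAut.one_apply]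
    constructor
    · intro v hv
      rw [hinv]
      conv_lhs => rw [← ih.1 v hv]
      exact happ _
    · intro v hv
      have hfix : Φ (pure j) (muHom G x y (pure j)) =
          muHom G x y (pure j) :=
        fix_mu G x y _ (ih.1 x hx) (ih.1 y hy) _
      have hcalc : Φ (pure j)
          ((muHom G x y (pure j)) * gen G v * (muHom G x y (pure j))⁻¹) =
          gen G v := by
        rw [_root_.map_mul, _root_.map_mul, _root_.map_inv, hfix, ih.2 v hv]
        group
      rw [hinv, _root_.map_inv, inv_inv]
      conv_lhs => rw [← hcalc]
      rw [happ]
  | mul w1 w2 ih1 ih2 =>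
    have hmul : ∀ u : RAAG G, Φ (w1 * w2) u = Φ w1 (Φ w2 u) := fun u => by
      rw [_root_.map_mul, MulAut.mul_apply]
    constructor
    · intro v hv
      rw [hmul, ih2.1 v hv, ih1.1 v hv]
    · intro v hv
      have hfix1 : Φ w1 (muHom G x y w2) = muHom G x y w2 :=
        fix_mu G x y _ (ih1.1 x hx) (ih1.1 y hy) _
      rw [hmul, ih2.2 v hv, _root_.map_mul, _root_.map_mul, _root_.map_inv, hfix1, ih1.2 v hv, _root_.map_mul]
      group

end RaagAux

end SILAux

/-- If `Γ` contains a separating intersection of links, then `Out(A_Γ)`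
contains a free subgroup of rank 2. -/
theorem out_hasFreeRankTwo_of_sepIntLinks [Fintype V] (G : SimpleGraph V)
    (h : SepIntLinks G) : HasFreeRankTwo (OutG G) := by
  classical
  obtain ⟨x, y, hxy, hnadj, z, hsx, hsy⟩ := h
  obtain ⟨hzS, hxS, hnrx⟩ := hsx
  obtain ⟨hzS', hyS, hnry⟩ := hsy
  set S := lk G x ∩ lk G y with hSdef
  set C : Set V := {v | ∃ hv : v ∈ Sᶜ, (G.induce Sᶜ).Reachable ⟨z, hzS⟩ ⟨v, hv⟩} with hCdef
  have hzC : z ∈ C := ⟨hzS, SimpleGraph.Reachable.refl _⟩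
  have hxC : x ∉ C := by
    rintro ⟨hv, hr⟩
    exact hnrx hr
  have hyC : y ∉ C := by
    rintro ⟨hv, hr⟩
    exact hnry hr
  have hSx : ∀ s ∈ S, G.Adj x s := fun s hs => hs.1
  have hSy : ∀ s ∈ S, G.Adj y s := fun s hs => hs.2
  have hmixS : ∀ u v : V, G.Adj u v → u ∈ C → v ∉ C → v ∈ S := by
    intro u v huv hu hv
    by_contra hvS
    obtain ⟨huS, hur⟩ := hu
    refine hv ⟨hvS, hur.trans (SimpleGraph.Adj.reachable ?_)⟩
    show (G.induce Sᶜ).Adj ⟨u, huS⟩ ⟨v, hvS⟩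
    exact huv
  have hmixX : ∀ u v : V, G.Adj u v → u ∈ C → v ∉ C → Commute (gen G x) (gen G v) :=
    fun u v huv hu hv => SILAux.raag_commute G (hSx v (hmixS u v huv hu hv))
  have hmixY : ∀ u v : V, G.Adj u v → u ∈ C → v ∉ C → Commute (gen G y) (gen G v) :=
    fun u v huv hu hv => SILAux.raag_commute G (hSy v (hmixS u v huv hu hv))
  have hxSc : x ∈ Sᶜ := fun hs => G.irrefl (hSx x hs)
  have hySc : y ∈ Sᶜ := fun hs => hnadj (hSx y hs)
  have hnxz : ¬ G.Adj x z := by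
    intro hadj
    refine hxC ⟨hxSc, SimpleGraph.Adj.reachable ?_⟩
    show (G.induce Sᶜ).Adj ⟨z, hzS⟩ ⟨x, hxSc⟩
    exact hadj.symm
  have hnyz : ¬ G.Adj y z := by
    intro hadj
    refine hyC ⟨hySc, SimpleGraph.Adj.reachable ?_⟩
    show (G.induce Sᶜ).Adj ⟨z, hzS⟩ ⟨y, hySc⟩
    exact hadj.symm
  have hzx : z ≠ x := by
    rintro rfl
    exact hnrx (SimpleGraph.Reachable.refl _)
  have hzy : z ≠ y := by
    rintro rfl
    exact hnry (SimpleGraph.Reachable.refl _)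
  set φx := SILAux.pcAut G C x hxC hmixX with hφxdef
  set φy := SILAux.pcAut G C y hyC hmixY with hφydef
  set Φ := FreeGroup.lift (fun j : Fin 2 => if j = 0 then φx else φy) with hΦdef
  have hkey := fun w => SILAux.key_lemma G C x y hxC hyC φx φy
    (SILAux.pcAut_gen G C x hxC hmixX) (SILAux.pcAut_gen G C y hyC hmixY) w
  set Ψ := (QuotientGroup.mk' (Inn (RAAG G))).comp Φ with hΨdef
  have hinj : Function.Injective Ψ := by
    refine (injective_iff_map_eq_one Ψ).2 ?_
    intro w hw
    have hinn : Φ w ∈ Inn (RAAG G) := (QuotientGroup.eq_one_iff (Φ w)).1 hw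
    obtain ⟨g, hg⟩ := hinn
    -- the retraction onto the free group on x, y, z
    set pf : V → FreeGroup (Fin 3) := fun v =>
      if v = x then FreeGroup.of 0 else if v = y then FreeGroup.of 1
        else if v = z then FreeGroup.of 2 else 1 with hpfdef
    have hnadj3 : ∀ a b : V, G.Adj a b → a = x ∨ a = y ∨ a = z →
        b = x ∨ b = y ∨ b = z → False := by
      rintro a b hab (rfl|rfl|rfl) (rfl|rfl|rfl)
      · exact G.irrefl hab
      · exact hnadj hab
      · exact hnxz hab
      · exact hnadj hab.symm
      · exact G.irrefl hab
      · exact hnyz hab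
      · exact hnxz hab.symm
      · exact hnyz hab.symm
      · exact G.irrefl hab
    have hprel : ∀ r ∈ raagRels G, FreeGroup.lift pf r = 1 := by
      rintro r ⟨u, v, huv, rfl⟩
      rw [map_commutatorElement, FreeGroup.lift_apply_of, FreeGroup.lift_apply_of]
      apply commutatorElement_eq_one_iff_commute.2
      by_cases hu : u = x ∨ u = y ∨ u = z
      · by_cases hv : v = x ∨ v = y ∨ v = z
        · exact (hnadj3 u v huv hu hv).elim
        · have h1 : pf v = 1 := by
            push_neg at hv
            simp [hpfdef, hv.1, hv.2.1, hv.2.2]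
          rw [h1]
          exact Commute.one_right _
      · have h1 : pf u = 1 := by
          push_neg at hu
          simp [hpfdef, hu.1, hu.2.1, hu.2.2]
        rw [h1]
        exact Commute.one_left _
    set p := PresentedGroup.toGroup hprel with hpdef
    have hpx : p (gen G x) = FreeGroup.of 0 := by
      have h0 : p (gen G x) = pf x := PresentedGroup.toGroup.of hprel
      rw [h0]
      simp [hpfdef]
    have hpy : p (gen G y) = FreeGroup.of 1 := by
      have h0 : p (gen G y) = pf y := PresentedGroup.toGroup.of hprel
      rw [h0]
      simp [hpfdef, hxy.symm]
    have hpz : p (gen G z) = FreeGroup.of 2 := by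
      have h0 : p (gen G z) = pf z := PresentedGroup.toGroup.of hprel
      rw [h0]
      simp [hpfdef, hzx, hzy]
    -- the three conjugation equations
    have hgx : g * gen G x * g⁻¹ = gen G x := by
      have h1 : MulAut.conj g (gen G x) = Φ w (gen G x) := by rw [hg]
      rw [MulAut.conj_apply, (hkey w).1 x hxC] at h1
      exact h1
    have hgy : g * gen G y * g⁻¹ = gen G y := by
      have h1 : MulAut.conj g (gen G y) = Φ w (gen G y) := by rw [hg]
      rw [MulAut.conj_apply, (hkey w).1 y hyC] at h1
      exact h1
    have hgz : g * gen G z * g⁻¹ =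
        (SILAux.muHom G x y w)⁻¹ * gen G z * SILAux.muHom G x y w := by
      have h1 : MulAut.conj g (gen G z) = Φ w (gen G z) := by rw [hg]
      rw [MulAut.conj_apply, (hkey w).2 z hzC] at h1
      exact h1
    -- push to the free group on three letters
    have e1 := congrArg p hgx
    rw [map_mul, map_mul, map_inv, hpx] at e1
    have e2 := congrArg p hgy
    rw [map_mul, map_mul, map_inv, hpy] at e2
    have c1 : Commute (p g) (FreeGroup.of (0 : Fin 3)) := by
      show p g * FreeGroup.of 0 = FreeGroup.of 0 * p g
      have h' := congrArg (· * p g) e1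
      simpa [mul_assoc] using h'
    have c2 : Commute (p g) (FreeGroup.of (1 : Fin 3)) := by
      show p g * FreeGroup.of 1 = FreeGroup.of 1 * p g
      have h' := congrArg (· * p g) e2
      simpa [mul_assoc] using h'
    have hg1 : p g = 1 := SILAux.eq_one_of_commute_two (by decide) c1 c2
    have e3 := congrArg p hgz
    rw [map_mul, map_mul, map_inv, map_mul, map_mul, map_inv, hpz, hg1] at e3
    have e3' : (FreeGroup.of (2 : Fin 3)) =
        (p (SILAux.muHom G x y w))⁻¹ * FreeGroup.of 2 * p (SILAux.muHom G x y w) := by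
      simpa using e3
    have c3 : Commute (p (SILAux.muHom G x y w)) (FreeGroup.of (2 : Fin 3)) := by
      show p (SILAux.muHom G x y w) * FreeGroup.of 2 =
        FreeGroup.of 2 * p (SILAux.muHom G x y w)
      calc p (SILAux.muHom G x y w) * FreeGroup.of 2
          = p (SILAux.muHom G x y w) *
            ((p (SILAux.muHom G x y w))⁻¹ * FreeGroup.of 2 * p (SILAux.muHom G x y w)) := by
            rw [← e3']
        _ = FreeGroup.of 2 * p (SILAux.muHom G x y w) := by group
    obtain ⟨n, hn⟩ := SILAux.eq_zpow_of_commute c3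
    -- retraction back to the free group of rank 2
    have hρν : ∀ u : FreeGroup (Fin 2),
        (FreeGroup.lift (fun k : Fin 3 => if k = 0 then FreeGroup.of (0 : Fin 2)
          else if k = 1 then FreeGroup.of (1 : Fin 2) else 1))
          (p (SILAux.muHom G x y u)) = u := by
      intro u
      have hcomp : ((FreeGroup.lift (fun k : Fin 3 => if k = 0 then FreeGroup.of (0 : Fin 2)
          else if k = 1 then FreeGroup.of (1 : Fin 2) else 1)).comp
            (p.comp (SILAux.muHom G x y))) = MonoidHom.id _ := by
        refine FreeGroup.ext_hom _ _ fun j => ?_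
        fin_cases j <;>
          simp [SILAux.muHom, FreeGroup.lift_apply_of, hpx, hpy]
      exact DFunLike.congr_fun hcomp u
    have hw1 : w = 1 := by
      have := hρν w
      rw [hn] at this
      rw [← this, map_zpow, FreeGroup.lift_apply_of]
      simp
    exact hw1
  exact ⟨Ψ.range, ⟨(MonoidHom.ofInjective hinj).symm⟩⟩
end

section
/- Suppose x, y are non-adjacent vertices of the finite simplicial graph Γ with x ≥ y, and st(y) separates Γ (i.e. the induced subgraph on the complement of st(y) is disconnected, with at least two connected components). Then Γ contains a separating intersection of links. -/
open SimpleGraph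

variable {V : Type*}

open scoped commutatorElement

private lemma walk_transfer (G : SimpleGraph V) (y : V)
    {a b : ↑((lk G y)ᶜ)} (p : (G.induce ((lk G y)ᶜ)).Walk a b) :
    a.1 ≠ y → ∃ (ha' : a.1 ∈ (st G y)ᶜ) (hb' : b.1 ∈ (st G y)ᶜ),
      (G.induce ((st G y)ᶜ)).Reachable ⟨a.1, ha'⟩ ⟨b.1, hb'⟩ := by
  induction p with
  | @nil u =>
    intro ha
    have ha' : (u : V) ∈ (st G y)ᶜ := by
      have := u.2
      simp only [st, lk, Set.mem_compl_iff, Set.mem_insert_iff, Set.mem_setOf_eq] at *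
      tauto
    exact ⟨ha', ha', SimpleGraph.Reachable.refl _⟩
  | @cons u v w h q ih =>
    intro ha
    have hadj : G.Adj u.1 v.1 := by
      simpa using h
    have hv : (v : V) ≠ y := by
      intro hvy
      have : (u : V) ∈ lk G y := by
        simp only [lk, Set.mem_setOf_eq]
        exact (hvy ▸ hadj).symm
      exact u.2 this
    obtain ⟨hv', hb', hre⟩ := ih hv
    have ha' : (u : V) ∈ (st G y)ᶜ := by
      have := u.2
      simp only [st, lk, Set.mem_compl_iff, Set.mem_insert_iff, Set.mem_setOf_eq] at *
      tauto
    refine ⟨ha', hb', SimpleGraph.Reachable.trans ?_ hre⟩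
    exact SimpleGraph.Adj.reachable (by simpa using hadj)

private lemma comps_eq (G : SimpleGraph V) {S Y1 Y2 : Set V} (h1 : IsCompOf G S Y1)
    (h2 : IsCompOf G S Y2) {v : V} (hv1 : v ∈ Y1) (hv2 : v ∈ Y2) : Y1 = Y2 := by
  have hvS : v ∈ S := h1.2.1 hv1
  ext b
  constructor
  · intro hb
    have hbS : b ∈ S := h1.2.1 hb
    have hr : (G.induce S).Reachable ⟨v, hvS⟩ ⟨b, hbS⟩ :=
      (h1.2.2 ⟨v, hvS⟩ hv1 ⟨b, hbS⟩).mpr hb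
    exact (h2.2.2 ⟨v, hvS⟩ hv2 ⟨b, hbS⟩).mp hr
  · intro hb
    have hbS : b ∈ S := h2.2.1 hb
    have hr : (G.induce S).Reachable ⟨v, hvS⟩ ⟨b, hbS⟩ :=
      (h2.2.2 ⟨v, hvS⟩ hv2 ⟨b, hbS⟩).mpr hb
    exact (h1.2.2 ⟨v, hvS⟩ hv1 ⟨b, hbS⟩).mp hr

/-- If `x, y` are non-adjacent vertices with `x ≥ y` and the induced
subgraph on the complement of `st y` is disconnected (has at least two connected
components), then `Γ` contains a separating intersection of links. -/
theorem sepIntLinks_of_nonadj_dominates [Fintype V] (G : SimpleGraph V) (x y : V)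
    (hxy : x ≠ y) (hadj : ¬ G.Adj x y) (hdom : Dominates G x y)
    (hsep : ∃ Y1 Y2 : Set V, IsCompOf G ((st G y)ᶜ) Y1 ∧ IsCompOf G ((st G y)ᶜ) Y2 ∧
      Y1 ≠ Y2) :
    SepIntLinks G := by
  -- lk y ⊆ lk x
  have hlk : lk G y ⊆ lk G x := by
    intro z hz
    have hz' := hdom hz
    rcases hz' with hz' | hz'
    · exact absurd (hz' ▸ hz : G.Adj y x).symm hadj
    · exact hz'
  have hS : lk G x ∩ lk G y = lk G y := Set.inter_eq_self_of_subset_right hlk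
  -- pick component not containing x
  obtain ⟨Y1, Y2, hY1, hY2, hne⟩ := hsep
  have hxY : x ∉ Y1 ∨ x ∉ Y2 := by
    by_contra h
    push_neg at h
    exact hne (comps_eq G hY1 hY2 h.1 h.2)
  obtain ⟨Y, hY, hxY⟩ : ∃ Y, IsCompOf G ((st G y)ᶜ) Y ∧ x ∉ Y := by
    rcases hxY with h | h
    · exact ⟨Y1, hY1, h⟩
    · exact ⟨Y2, hY2, h⟩
  obtain ⟨z, hz⟩ := hY.1
  have hzst : z ∈ (st G y)ᶜ := hY.2.1 hz
  have hzlk : z ∈ (lk G y)ᶜ := by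
    intro hc
    exact hzst (Or.inr hc)
  have hzy : z ≠ y := by
    intro hc
    exact hzst (Or.inl hc)
  have hxst : x ∈ (st G y)ᶜ := by
    intro hc
    rcases hc with hc | hc
    · exact hxy hc
    · exact hadj (hc : G.Adj y x).symm
  have hxlk : x ∈ (lk G y)ᶜ := fun hc => hadj (hc : G.Adj y x).symm
  have hylk : y ∈ (lk G y)ᶜ := fun hc => (G.irrefl (hc : G.Adj y y))
  refine ⟨x, y, hxy, hadj, z, ?_, ?_⟩
  · -- SeparatesFrom G (lk x ∩ lk y) z x
    rw [SeparatesFrom, hS]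
    refine ⟨hzlk, hxlk, ?_⟩
    intro hre
    obtain ⟨p⟩ := hre
    obtain ⟨_, hx', hre'⟩ := walk_transfer G y p hzy
    have := (hY.2.2 ⟨z, hzst⟩ hz ⟨x, hx'⟩).mp hre'
    exact hxY this
  · -- SeparatesFrom G (lk x ∩ lk y) z y
    rw [SeparatesFrom, hS]
    refine ⟨hzlk, hylk, ?_⟩
    intro hre
    obtain ⟨p⟩ := hre.symm
    cases p with
    | nil => exact hzy rfl
    | cons h q =>
      rename_i v
      have hadj' : G.Adj y v.1 := by simpa using h
      exact v.2 hadj'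
end

section
/- Suppose the finite simplicial graph Γ does not contain a separating intersection of links. Let α and β be automorphisms of A_Γ, each of which is either a partial conjugation or a transvection, with multipliers x^{±1} and y^{±1} respectively (x, y vertices of Γ). If α fixes the generator y and β fixes the generator x, then α and β commute in Aut(A_Γ). -/
open SimpleGraph
open scoped commutatorElement

variable {V : Type*}

/-- `φ` is a transvection or a non-inner partial conjugation with multiplier `x^{±1}`. -/
def IsTvOrPcWithMult (G : SimpleGraph V) (φ : MulAut (RAAG G)) (x : V) : Prop :=
  (∃ ε z, IsTransvection G φ x z ε) ∨ (∃ ε Y, IsPartialConj G φ x ε Y)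

section SixHelpers
variable (G : SimpleGraph V)

variable (G : SimpleGraph V)

lemma raag_perm_hom (x y : V) (hne : x ≠ y) (hadj : ¬ G.Adj x y) :
    ∃ f : RAAG G →* Equiv.Perm (Fin 3),
      f (gen G x) = Equiv.swap 0 1 ∧ f (gen G y) = Equiv.swap 1 2 := by
  classical
  set f0 : V → Equiv.Perm (Fin 3) := fun v =>
    if v = x then Equiv.swap 0 1 else if v = y then Equiv.swap 1 2 else 1 with hf0
  have hrel : ∀ r ∈ raagRels G, FreeGroup.lift f0 r = 1 := by
    rintro r ⟨a, b, hab, rfl⟩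
    rw [map_commutatorElement]
    simp only [FreeGroup.lift_apply_of]
    rw [commutatorElement_eq_one_iff_commute]
    simp only [hf0]
    split_ifs <;>
      first
        | exact Commute.refl _
        | exact Commute.one_left _
        | exact Commute.one_right _
        | (exfalso; subst_vars;
           first
             | exact hadj hab
             | exact hadj hab.symm)
  refine ⟨PresentedGroup.toGroup hrel, ?_, ?_⟩
  · show PresentedGroup.toGroup hrel (PresentedGroup.of x) = _
    rw [PresentedGroup.toGroup.of]; simp [hf0]
  · show PresentedGroup.toGroup hrel (PresentedGroup.of y) = _
    rw [PresentedGroup.toGroup.of]; simp [hf0, hne.symm]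

lemma gen_ne_one (x : V) : gen G x ≠ 1 := by
  classical
  set f0 : V → Equiv.Perm (Fin 3) := fun v => if v = x then Equiv.swap 0 1 else 1 with hf0
  have hrel : ∀ r ∈ raagRels G, FreeGroup.lift f0 r = 1 := by
    rintro r ⟨a, b, hab, rfl⟩
    rw [map_commutatorElement]
    simp only [FreeGroup.lift_apply_of]
    rw [commutatorElement_eq_one_iff_commute]
    simp only [hf0]
    split_ifs <;>
      first
        | exact Commute.refl _
        | exact Commute.one_left _
        | exact Commute.one_right _
  intro hgen
  have h1 : PresentedGroup.toGroup hrel (gen G x) = Equiv.swap 0 1 := by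
    show PresentedGroup.toGroup hrel (PresentedGroup.of x) = _
    rw [PresentedGroup.toGroup.of]; simp [hf0]
  rw [hgen, map_one] at h1
  have := h1.symm
  rw [Equiv.swap_eq_one_iff] at this
  exact (by decide : (0 : Fin 3) ≠ 1) this

lemma not_commute_gen {x y : V} (hne : x ≠ y) (hadj : ¬ G.Adj x y) :
    ¬ Commute (gen G x) (gen G y) := by
  obtain ⟨f, hfx, hfy⟩ := raag_perm_hom G x y hne hadj
  intro hc
  have := hc.map f
  rw [hfx, hfy] at this
  have h2 : Equiv.swap (0 : Fin 3) 1 * Equiv.swap 1 2 = Equiv.swap 1 2 * Equiv.swap 0 1 := this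
  revert h2
  decide

lemma commute_gen_of_adj {x y : V} (hadj : G.Adj x y) :
    Commute (gen G x) (gen G y) := by
  rw [← commutatorElement_eq_one_iff_commute]
  have hmem : (⁅FreeGroup.of x, FreeGroup.of y⁆ : FreeGroup V) ∈
      Subgroup.normalClosure (raagRels G) :=
    Subgroup.subset_normalClosure ⟨x, y, hadj, rfl⟩
  have h2 : (QuotientGroup.mk' (Subgroup.normalClosure (raagRels G)))
      ⁅FreeGroup.of x, FreeGroup.of y⁆ = 1 := (QuotientGroup.eq_one_iff _).mpr hmem
  rw [map_commutatorElement] at h2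
  exact h2

lemma aut_comm_of_gen {α β : MulAut (RAAG G)}
    (hcomm : ∀ v, α (β (gen G v)) = β (α (gen G v))) : α * β = β * α := by
  have hext : (α.toMonoidHom.comp β.toMonoidHom) = (β.toMonoidHom.comp α.toMonoidHom) :=
    PresentedGroup.ext fun v => hcomm v
  refine MulEquiv.ext fun g => ?_
  have := DFunLike.congr_fun hext g
  simpa using this


end SixHelpers

section SixGraphHelpers

variable {G : SimpleGraph V}

lemma mem_st_iff {a x : V} : a ∈ st G x ↔ a = x ∨ G.Adj x a := Set.mem_insert_iff

lemma self_mem_st (x : V) : x ∈ st G x := Set.mem_insert x _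

lemma not_mem_st {a x : V} (h1 : a ≠ x) (h2 : ¬ G.Adj x a) : a ∈ (st G x)ᶜ := by
  intro hmem
  rcases mem_st_iff.mp hmem with rfl | hadj
  · exact h1 rfl
  · exact h2 hadj

lemma walk_closed {α : Type*} {H : SimpleGraph α} (P : α → Prop)
    (hP : ∀ a b, H.Adj a b → P a → P b) :
    ∀ {a b : α}, H.Walk a b → P a → P b := by
  intro a b w
  induction w with
  | nil => exact id
  | cons hadj _ ih => exact fun ha => ih (hP _ _ hadj ha)

lemma IsCompOf.mem_of_adj {A Y : Set V} (h : IsCompOf G A Y)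
    {a b : V} (ha : a ∈ Y) (hb : b ∈ A) (hab : G.Adj a b) : b ∈ Y := by
  refine (h.2.2 ⟨a, h.2.1 ha⟩ ha ⟨b, hb⟩).mp ?_
  exact SimpleGraph.Adj.reachable (by simpa using hab)

lemma IsCompOf.subset_comp {A B W Z : Set V}
    (hW : IsCompOf G A W) (hZ : IsCompOf G B Z) (hWB : W ⊆ B)
    {z : V} (hzW : z ∈ W) (hzZ : z ∈ Z) : W ⊆ Z := by
  intro w hw
  obtain ⟨p⟩ : (G.induce A).Reachable ⟨z, hW.2.1 hzW⟩ ⟨w, hW.2.1 hw⟩ :=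
    (hW.2.2 _ hzW _).mpr hw
  have key := walk_closed (H := G.induce A)
    (fun c => c.1 ∈ W ∧ ∀ hc : c.1 ∈ B, (G.induce B).Reachable ⟨z, hWB hzW⟩ ⟨c.1, hc⟩)
    ?_ p ⟨hzW, fun hc => Reachable.refl _⟩
  · exact (hZ.2.2 ⟨z, hZ.2.1 hzZ⟩ hzZ ⟨w, hWB hw⟩).mp (key.2 (hWB hw))
  · rintro a b hab ⟨haW, har⟩
    have hadj : G.Adj a.1 b.1 := by simpa using hab
    have hbW : b.1 ∈ W := hW.mem_of_adj haW b.2 hadj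
    refine ⟨hbW, fun hc => (har (hWB haW)).trans (SimpleGraph.Adj.reachable ?_)⟩
    simpa using hadj

lemma sil_of_link_subset {x y u : V} (hxy : x ≠ y) (hadj : ¬ G.Adj x y)
    (hux : u ≠ x) (huy : u ≠ y) (hlk : lk G u ⊆ lk G x ∩ lk G y) : SepIntLinks G := by
  have huS : u ∈ (lk G x ∩ lk G y)ᶜ := by
    rintro ⟨h1, h2⟩
    have : x ∈ lk G u := (h1 : G.Adj x u).symm
    exact G.loopless.irrefl x (hlk this).1
  have hxS : x ∈ (lk G x ∩ lk G y)ᶜ := fun hx => G.loopless.irrefl x hx.1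
  have hyS : y ∈ (lk G x ∩ lk G y)ᶜ := fun hy => G.loopless.irrefl y hy.2
  have hnr : ∀ (t : V) (ht : t ∈ (lk G x ∩ lk G y)ᶜ), t ≠ u →
      ¬ (G.induce (lk G x ∩ lk G y)ᶜ).Reachable ⟨u, huS⟩ ⟨t, ht⟩ := by
    rintro t ht htu ⟨p⟩
    have := walk_closed (H := G.induce (lk G x ∩ lk G y)ᶜ) (fun c => c.1 = u) ?_ p rfl
    · exact htu this
    · rintro a b hab rfl
      exfalso
      have hadj' : G.Adj a.1 b.1 := by simpa using hab
      exact b.2 (hlk hadj')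
  exact ⟨x, y, hxy, hadj, u, ⟨huS, hxS, hnr x hxS (Ne.symm hux)⟩,
    ⟨huS, hyS, hnr y hyS (Ne.symm huy)⟩⟩

lemma sil_of_two_comps {x y z : V} {W Z : Set V}
    (hxy : x ≠ y) (hadj : ¬ G.Adj x y)
    (hW : IsCompOf G (st G x)ᶜ W) (hZ : IsCompOf G (st G y)ᶜ Z)
    (hyW : y ∉ W) (hxZ : x ∉ Z) (hzW : z ∈ W) (hzZ : z ∈ Z) : SepIntLinks G := by
  have hyx : y ∈ (st G x)ᶜ := not_mem_st (Ne.symm hxy) hadj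
  have hxy' : x ∈ (st G y)ᶜ := not_mem_st hxy (fun ha => hadj ha.symm)
  -- W avoids st y
  have hWy : W ⊆ (st G y)ᶜ := by
    intro w hw hst
    rcases mem_st_iff.mp hst with rfl | ha
    · exact hyW hw
    · exact hyW (hW.mem_of_adj hw hyx ha.symm)
  have hZx : Z ⊆ (st G x)ᶜ := by
    intro w hw hst
    rcases mem_st_iff.mp hst with rfl | ha
    · exact hxZ hw
    · exact hxZ (hZ.mem_of_adj hw hxy' ha.symm)
  have hWZ : W ⊆ Z := hW.subset_comp hZ hWy hzW hzZ
  have hZW : Z ⊆ W := hZ.subset_comp hW hZx hzZ hzW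
  -- membership facts
  have hzS : z ∈ (lk G x ∩ lk G y)ᶜ := by
    rintro ⟨h1, _⟩
    exact (hW.2.1 hzW) (mem_st_iff.mpr (Or.inr h1))
  have hxS : x ∈ (lk G x ∩ lk G y)ᶜ := fun hx => G.loopless.irrefl x hx.1
  have hyS : y ∈ (lk G x ∩ lk G y)ᶜ := fun hy => G.loopless.irrefl y hy.2
  -- the component of z in the complement of lk x ∩ lk y stays inside W
  have hclosed : ∀ a b : ((lk G x ∩ lk G y)ᶜ : Set V),
      (G.induce (lk G x ∩ lk G y)ᶜ).Adj a b → a.1 ∈ W → b.1 ∈ W := by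
    rintro a b hab haW
    have hadj' : G.Adj a.1 b.1 := by simpa using hab
    by_cases hbx : b.1 ∈ st G x
    · exfalso
      rcases mem_st_iff.mp hbx with hbx' | hbx'
      · exact (hW.2.1 haW) (mem_st_iff.mpr (Or.inr (by have hh := hadj'.symm; rw [hbx'] at hh; exact hh)))
      · -- b ∈ lk x, b ∉ lk y, b ≠ y, so b ∈ (st y)ᶜ; adjacent to a ∈ Z so b ∈ Z ⊆ (st x)ᶜ
        have hbS := b.2
        have hbly : b.1 ∉ lk G y := fun hbly => hbS ⟨hbx', hbly⟩
        have hbny : b.1 ≠ y := fun he => hadj (he ▸ hbx')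
        have hbsty : b.1 ∈ (st G y)ᶜ := not_mem_st hbny (fun ha => hbly ha)
        have : b.1 ∈ Z := hZ.mem_of_adj (hWZ haW) hbsty hadj'
        exact (hZx this) hbx
    · exact hW.mem_of_adj haW hbx hadj'
  have hnr : ∀ (t : V) (ht : t ∈ (lk G x ∩ lk G y)ᶜ), t ∉ W →
      ¬ (G.induce (lk G x ∩ lk G y)ᶜ).Reachable ⟨z, hzS⟩ ⟨t, ht⟩ := by
    rintro t ht htW ⟨p⟩
    exact htW (walk_closed (fun c => c.1 ∈ W) hclosed p hzW)
  have hxW : x ∉ W := fun hx => (hW.2.1 hx) (self_mem_st x)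
  exact ⟨x, y, hxy, hadj, z, ⟨hzS, hxS, hnr x hxS hxW⟩, ⟨hzS, hyS, hnr y hyS hyW⟩⟩


end SixGraphHelpers

section RaagAutHelpers
variable {G : SimpleGraph V}

lemma gen_zpow_ne_one (G : SimpleGraph V) (x : V) {ε : ℤ} (hε : ε = 1 ∨ ε = -1) :
    gen G x ^ ε ≠ 1 := by
  rcases hε with rfl | rfl
  · simpa using gen_ne_one G x
  · intro h1
    rw [zpow_neg, zpow_one, inv_eq_one] at h1
    exact gen_ne_one G x h1

lemma fixed_ne_target {φ : MulAut (RAAG G)} {x u : V} {ε : ℤ}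
    (hε : ε = 1 ∨ ε = -1)
    (hu : φ (gen G u) = gen G u * gen G x ^ ε ∨ φ (gen G u) = gen G x ^ ε * gen G u)
    {w : V} (hw : φ (gen G w) = gen G w) : w ≠ u := by
  rintro rfl
  rcases hu with h' | h'
  · rw [hw] at h'
    exact gen_zpow_ne_one G x hε (left_eq_mul.mp h')
  · rw [hw] at h'
    exact gen_zpow_ne_one G x hε (right_eq_mul.mp h')

lemma pc_mem_commute {φ : MulAut (RAAG G)} {x : V} {ε : ℤ} {Y : Set V}
    (hP : IsPartialConj G φ x ε Y) {w : V} (hw : w ∈ Y)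
    (hfix : φ (gen G w) = gen G w) : Commute (gen G x) (gen G w) := by
  have h' := hP.2.2.2.1 w hw
  rw [hfix, zpow_neg] at h'
  have h2 : gen G x ^ ε * gen G w = gen G w * gen G x ^ ε := by
    conv_lhs => rw [h']
    simp [mul_assoc]
  have hc : Commute (gen G x ^ ε) (gen G w) := h2
  rcases hP.1 with rfl | rfl
  · simpa using hc
  · rw [zpow_neg, zpow_one] at hc
    exact Commute.inv_left_iff.mp hc

lemma comm_gen_TT (h : ¬ SepIntLinks G) {α β : MulAut (RAAG G)}
    {x y u v : V} {ε δ : ℤ} (hTα : IsTransvection G α x u ε)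
    (hTβ : IsTransvection G β y v δ)
    (hαy : α (gen G y) = gen G y) (hβx : β (gen G x) = gen G x) (w : V) :
    α (β (gen G w)) = β (α (gen G w)) := by
  obtain ⟨hxu, hdx, hε, hαu, hαf⟩ := hTα
  obtain ⟨hyv, hdy, hδ, hβv, hβf⟩ := hTβ
  by_cases hwu : w = u
  · subst hwu
    by_cases hwv : w = v
    · subst hwv
      -- overlap case: w is the target of both transvections
      have hcom : Commute (gen G x) (gen G y) := by
        by_cases hxy : x = y
        · exact hxy ▸ Commute.refl _
        by_cases hadj : G.Adj x y
        · exact commute_gen_of_adj G hadj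
        exfalso
        refine h (sil_of_link_subset hxy hadj (Ne.symm hxu) (Ne.symm hyv) ?_)
        intro t ht
        have htx : t ∈ st G x := hdx ht
        have hty : t ∈ st G y := hdy ht
        have h1 : t ≠ x := by
          intro he
          rcases mem_st_iff.mp hty with he2 | ha
          · exact hxy (he.symm.trans he2)
          · rw [he] at ha
            exact hadj ha.symm
        have h2 : t ≠ y := by
          intro he
          rcases mem_st_iff.mp htx with he2 | ha
          · exact hxy (he2.symm.trans he)
          · rw [he] at ha
            exact hadj ha
        constructor
        · rcases mem_st_iff.mp htx with h' | h'
          · exact absurd h' h1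
          · exact h'
        · rcases mem_st_iff.mp hty with h' | h'
          · exact absurd h' h2
          · exact h'
      have hzz := (hcom.zpow_zpow ε δ).eq
      rcases hαu with hα1 | hα1 <;> rcases hβv with hβ1 | hβ1 <;>
        simp only [hβ1, hα1, map_mul, map_zpow, hαy, hβx] <;>
        (try simp only [mul_assoc]) <;>
        first
          | rfl
          | rw [hzz]
          | rw [← mul_assoc, ← mul_assoc, hzz]
    · -- w = u but w ≠ v
      have hβw : β (gen G w) = gen G w := hβf w hwv
      rcases hαu with hα1 | hα1 <;>
        simp only [hβw, hα1, map_mul, map_zpow, hβx]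
  · by_cases hwv : w = v
    · subst hwv
      have hαw : α (gen G w) = gen G w := hαf w hwu
      rcases hβv with hβ1 | hβ1 <;>
        simp only [hαw, hβ1, map_mul, map_zpow, hαy]
    · simp only [hαf w hwu, hβf w hwv]

lemma comm_gen_TP (h : ¬ SepIntLinks G) {α β : MulAut (RAAG G)}
    {x y u : V} {ε δ : ℤ} {Z : Set V} (hTα : IsTransvection G α x u ε)
    (hPβ : IsPartialConj G β y δ Z)
    (hαy : α (gen G y) = gen G y) (hβx : β (gen G x) = gen G x) (w : V) :
    α (β (gen G w)) = β (α (gen G w)) := by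
  obtain ⟨hxu, hdx, hε, hαu, hαf⟩ := hTα
  have hZ := hPβ.2.1
  have hβin := hPβ.2.2.2.1
  have hβf := hPβ.2.2.2.2
  by_cases hwZ : w ∈ Z
  · by_cases hwu : w = u
    · subst hwu
      -- overlap case: the target of α lies in the component Z of β
      have hcom : Commute (gen G x) (gen G y) := by
        by_cases hxy : x = y
        · exact hxy ▸ Commute.refl _
        by_cases hadj : G.Adj x y
        · exact commute_gen_of_adj G hadj
        exfalso
        have hNC := not_commute_gen G hxy hadj
        have hxy' : x ∈ (st G y)ᶜ := not_mem_st hxy fun ha => hadj ha.symm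
        have hxZ : x ∉ Z := fun hxZ => hNC ((pc_mem_commute hPβ hxZ hβx).symm)
        have hZx : ∀ t ∈ Z, t ∉ st G x := by
          intro t htZ hst
          rcases mem_st_iff.mp hst with he | ha
          · exact hxZ (he ▸ htZ)
          · exact hxZ (hZ.mem_of_adj htZ hxy' ha.symm)
        refine h (sil_of_link_subset hxy hadj (fun he => hxZ (he ▸ hwZ)) ?_ ?_)
        · intro he
          refine (hZ.2.1 hwZ) ?_
          rw [he]
          exact self_mem_st y
        · intro t ht
          have htx : t ∈ st G x := hdx ht
          have h1 : t ≠ x := by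
            intro he
            rw [he] at ht
            exact hxZ (hZ.mem_of_adj hwZ hxy' ht)
          have htsty : t ∈ st G y := by
            by_contra hns
            have htZ : t ∈ Z := hZ.mem_of_adj hwZ hns ht
            exact (hZx t htZ) htx
          have h2 : t ≠ y := by
            intro he
            rcases mem_st_iff.mp htx with he2 | ha
            · exact hxy (he2.symm.trans he)
            · rw [he] at ha
              exact hadj ha
          constructor
          · rcases mem_st_iff.mp htx with h' | h'
            · exact absurd h' h1
            · exact h'
          · rcases mem_st_iff.mp htsty with h' | h'
            · exact absurd h' h2
            · exact h'
      have hβw := hβin w hwZ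
      have hzz1 := (hcom.zpow_zpow ε δ).eq
      have hzz2 := (hcom.zpow_zpow ε (-δ)).eq
      rcases hαu with hα1 | hα1 <;>
        simp only [hβw, hα1, map_mul, map_zpow, hαy, hβx] <;>
        (try simp only [mul_assoc]) <;>
        first
          | rfl
          | rw [hzz1]
          | rw [← mul_assoc, ← hzz2, mul_assoc]
    · have hβw := hβin w hwZ
      have hαw := hαf w hwu
      simp only [hβw, hαw, map_mul, map_zpow, hαy]
  · by_cases hwu : w = u
    · subst hwu
      have hβw := hβf w hwZ
      rcases hαu with hα1 | hα1 <;>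
        simp only [hβw, hα1, map_mul, map_zpow, hβx]
    · simp only [hβf w hwZ, hαf w hwu]

lemma comm_gen_PP (h : ¬ SepIntLinks G) {α β : MulAut (RAAG G)}
    {x y : V} {ε δ : ℤ} {W Z : Set V} (hPα : IsPartialConj G α x ε W)
    (hPβ : IsPartialConj G β y δ Z)
    (hαy : α (gen G y) = gen G y) (hβx : β (gen G x) = gen G x) (w : V) :
    α (β (gen G w)) = β (α (gen G w)) := by
  have hW := hPα.2.1
  have hZ := hPβ.2.1
  have hαin := hPα.2.2.2.1
  have hαf := hPα.2.2.2.2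
  have hβin := hPβ.2.2.2.1
  have hβf := hPβ.2.2.2.2
  by_cases hwW : w ∈ W <;> by_cases hwZ : w ∈ Z
  · -- overlap case
    have hcom : Commute (gen G x) (gen G y) := by
      by_cases hxy : x = y
      · exact hxy ▸ Commute.refl _
      by_cases hadj : G.Adj x y
      · exact commute_gen_of_adj G hadj
      exfalso
      have hNC := not_commute_gen G hxy hadj
      have hyW : y ∉ W := fun hy => hNC (pc_mem_commute hPα hy hαy)
      have hxZ : x ∉ Z := fun hx => hNC ((pc_mem_commute hPβ hx hβx).symm)
      exact h (sil_of_two_comps hxy hadj hW hZ hyW hxZ hwW hwZ)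
    have hc1 := (hcom.zpow_zpow ε δ).eq
    have hc2 := (hcom.zpow_zpow (-ε) (-δ)).eq
    have hαw := hαin w hwW
    have hβw := hβin w hwZ
    simp only [hβw, hαw, map_mul, map_zpow, hαy, hβx]
    simp only [mul_assoc]
    rw [hc1, ← mul_assoc, ← hc2, mul_assoc]
  · have hαw := hαin w hwW
    simp only [hβf w hwZ, hαw, map_mul, map_zpow, hβx]
  · have hβw := hβin w hwZ
    simp only [hβw, hαf w hwW, map_mul, map_zpow, hαy]
  · simp only [hαf w hwW, hβf w hwZ]

end RaagAutHelpers

/-- If `Γ` has no separating intersection of links and `α, β` are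
transvections or partial conjugations with multipliers `x^{±1}`, `y^{±1}` which fix each
other's multipliers, then `α` and `β` commute in `Aut(A_Γ)`. -/
theorem commute_of_fix_multipliers [Fintype V] (G : SimpleGraph V)
    (h : ¬ SepIntLinks G) (α β : MulAut (RAAG G)) (x y : V)
    (hα : IsTvOrPcWithMult G α x) (hβ : IsTvOrPcWithMult G β y)
    (hαy : α (gen G y) = gen G y) (hβx : β (gen G x) = gen G x) :
    α * β = β * α := by
  refine aut_comm_of_gen G ?_
  intro w
  rcases hα with ⟨ε, u, hTα⟩ | ⟨ε, W, hPα⟩ <;> rcases hβ with ⟨δ, v, hTβ⟩ | ⟨δ, Z, hPβ⟩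
  · exact comm_gen_TT h hTα hTβ hαy hβx w
  · exact comm_gen_TP h hTα hPβ hαy hβx w
  · exact (comm_gen_TP h hTβ hPα hβx hαy w).symm
  · exact comm_gen_PP h hPα hPβ hαy hβx w
end
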